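/- Let n ≥ 1, let λ₀, λ₁, λ₂ be complex numbers such that every zero of U(z) = λ₀ + λ₁·n·z + λ₂·(n(n−1)/2)·z² lies in the half-plane |z| ≤ |z − n/2|, and let B be the associated operator of the class ℬ_n. If P is a complex polynomial of degree at most n with no zero in |z| < 1, then for every complex number α with |α| ≤ 1, every R > 1 and every z with |z| ≥ 1, one has | B[P∘σ](z) − α·B[P](z) | ≤ | B[P*∘σ](z) − α·B[P*](z) | − (|Rⁿ − α|·|Λ_n| − |1 − α|·|λ₀|)·m, where P*(z) = zⁿ·conj(P(1/conj(z))) and m = min_{|z|=1} |P(z)|. -/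

import Mathlib

open Polynomial Real

/-- The `ℬₙ`-operator with parameters `l0, l1, l2`:
`B[P](z) = λ₀·P(z) + λ₁·(nz/2)·P′(z) + (λ₂/2)·(nz/2)²·P″(z)`. -/
noncomputable def Bop (n : ℕ) (l0 l1 l2 : ℂ) (P : Polynomial ℂ) : Polynomial ℂ :=
  Polynomial.C l0 * P
    + Polynomial.C (l1 * ((n : ℂ) / 2)) * (Polynomial.X * derivative P)
    + Polynomial.C (l2 / 2 * ((n : ℂ) / 2) ^ 2)
        * (Polynomial.X ^ 2 * derivative (derivative P))

/-- Every zero of `U(z) = λ₀ + λ₁·n·z + λ₂·(n(n−1)/2)·z²` lies in the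
half-plane `|z| ≤ |z − n/2|`. -/
def AdmissibleParams (n : ℕ) (l0 l1 l2 : ℂ) : Prop :=
  ∀ z : ℂ, l0 + l1 * (n : ℂ) * z + l2 * ((n : ℂ) * ((n : ℂ) - 1) / 2) * z ^ 2 = 0 →
    ‖z‖ ≤ ‖(z - (n : ℂ) / 2)‖

/-- `Λₙ = λ₀ + λ₁·n²/2 + λ₂·n³(n−1)/8`. -/
noncomputable def Lam (n : ℕ) (l0 l1 l2 : ℂ) : ℂ :=
  l0 + l1 * (n : ℂ) ^ 2 / 2 + l2 * (n : ℂ) ^ 3 * ((n : ℂ) - 1) / 8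

/-- The polynomial `z ↦ P(Rz)`, i.e. `P ∘ σ` with `σ(z) = Rz`. -/
noncomputable def dilate (R : ℝ) (P : Polynomial ℂ) : Polynomial ℂ :=
  P.comp (Polynomial.C (R : ℂ) * Polynomial.X)

/-- `‖f‖_p = ((1/2π) ∫₀^{2π} |f(e^{iθ})|^p dθ)^{1/p}`. -/
noncomputable def circNorm (p : ℝ) (f : ℂ → ℂ) : ℝ :=
  ((2 * π)⁻¹ * ∫ θ in (0:ℝ)..(2 * π),
      ‖(f (Complex.exp (θ * Complex.I)))‖ ^ p) ^ (1 / p)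

/-- `min_{|z|=1} |f(z)|`. -/
noncomputable def minModulus (f : ℂ → ℂ) : ℝ :=
  sInf ((fun z => ‖(f z)‖) '' {z : ℂ | ‖z‖ = 1})

/-- `max_{|z|=1} |f(z)|`. -/
noncomputable def maxModulus (f : ℂ → ℂ) : ℝ :=
  sSup ((fun z => ‖(f z)‖) '' {z : ℂ | ‖z‖ = 1})

/-- The conjugate-reciprocal polynomial `Q*(z) = zⁿ·conj(Q(1/conj z))`,
whose `j`-th coefficient is the conjugate of the `(n−j)`-th coefficient of `Q`. -/
noncomputable def conjRecip (n : ℕ) (Q : Polynomial ℂ) : Polynomial ℂ :=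
  (Q.map (starRingEnd ℂ)).reflect n

/-- Compatibility: the complex absolute value as a bundled absolute value. -/
noncomputable def Complex.abs : AbsoluteValue ℂ ℝ where
  toFun z := ‖z‖
  map_mul' := norm_mul
  nonneg' := norm_nonneg
  eq_zero' _ := norm_eq_zero
  add_le' := norm_add_le

theorem Complex.abs_apply (z : ℂ) : Complex.abs z = ‖z‖ := rfl

theorem Complex.norm_eq_abs (z : ℂ) : ‖z‖ = Complex.abs z := rfl

theorem Complex.sq_abs (z : ℂ) : Complex.abs z ^ 2 = Complex.normSq z := Complex.sq_norm z

@[simp]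
theorem Complex.abs_ofReal (r : ℝ) : Complex.abs (r : ℂ) = |r| := by
  simp [Complex.abs_apply]

@[simp]
theorem Complex.abs_conj (z : ℂ) : Complex.abs (starRingEnd ℂ z) = Complex.abs z := by
  simp [Complex.abs_apply]

@[simp]
theorem Complex.abs_natCast (k : ℕ) : Complex.abs (k : ℂ) = k := by
  simp [Complex.abs_apply]

@[simp]
theorem Complex.abs_ofNat (k : ℕ) [k.AtLeastTwo] :
    Complex.abs (OfNat.ofNat k : ℂ) = OfNat.ofNat k := by
  simp [Complex.abs_apply]

@[simp]
theorem Complex.abs_I : Complex.abs Complex.I = 1 := by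
  simp [Complex.abs_apply]

@[simp]
theorem Complex.abs_exp_ofReal_mul_I (x : ℝ) :
    Complex.abs (Complex.exp (x * Complex.I)) = 1 := by
  simp [Complex.abs_apply]

theorem Complex.continuous_abs : Continuous Complex.abs := continuous_norm

theorem Complex.re_le_abs (z : ℂ) : z.re ≤ Complex.abs z := Complex.re_le_norm z

namespace BnAux


local notation "conj'" => starRingEnd ℂ

lemma abs_sq_identity (w a : ℂ) :
    Complex.abs (conj' w * a - 1) ^ 2 - Complex.abs (w - a) ^ 2
      = (Complex.abs w ^ 2 - 1) * (Complex.abs a ^ 2 - 1) := by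
  rw [Complex.sq_abs, Complex.sq_abs, Complex.sq_abs, Complex.sq_abs]
  simp only [Complex.normSq_apply, Complex.sub_re, Complex.sub_im, Complex.mul_re,
    Complex.mul_im, Complex.conj_re, Complex.conj_im, Complex.one_re, Complex.one_im]
  ring

lemma abs_mul_conj_sub_one (w : ℂ) (hw : 1 < Complex.abs w) :
    Complex.abs (w * conj' w - 1) = Complex.abs w ^ 2 - 1 := by
  rw [Complex.mul_conj]
  have h : (Complex.normSq w : ℝ) = Complex.abs w ^ 2 := (Complex.sq_abs w).symm
  have h2 : ((Complex.normSq w : ℂ) - 1) = ((Complex.normSq w - 1 : ℝ) : ℂ) := by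
    push_cast; ring
  rw [h2, Complex.abs_ofReal, abs_of_nonneg (by rw [h]; nlinarith)]
  rw [h]

lemma denom_ne_zero (w : ℂ) (hw : 1 < Complex.abs w) : w * conj' w - 1 ≠ 0 := by
  intro h
  have := abs_mul_conj_sub_one w hw
  rw [h] at this
  simp at this
  nlinarith

/-- Each `1/(w-a)` with `|a| ≤ 1` lies in the closed ball of center
`conj w / (w conj w - 1)` and radius `1/(|w|^2-1)`. -/
lemma mem_ball_of_abs_le {w a : ℂ} (hw : 1 < Complex.abs w) (ha : Complex.abs a ≤ 1) :
    Complex.abs ((w - a)⁻¹ - conj' w / (w * conj' w - 1))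
      ≤ 1 / (Complex.abs w ^ 2 - 1) := by
  have hA : (0:ℝ) < Complex.abs w ^ 2 - 1 := by nlinarith
  have hwa : w - a ≠ 0 := by
    intro h
    have : w = a := by linear_combination h
    rw [this] at hw; linarith
  have hD := denom_ne_zero w hw
  have h1 : (w - a)⁻¹ - conj' w / (w * conj' w - 1)
      = (conj' w * a - 1) / ((w - a) * (w * conj' w - 1)) := by
    field_simp
    ring
  rw [h1, map_div₀, map_mul, abs_mul_conj_sub_one w hw]
  have hnum : Complex.abs (conj' w * a - 1) ≤ Complex.abs (w - a) := by
    have := abs_sq_identity w a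
    have h3 : Complex.abs a ^ 2 - 1 ≤ 0 := by nlinarith [Complex.abs.nonneg a]
    have h2 : (Complex.abs w ^ 2 - 1) * (Complex.abs a ^ 2 - 1) ≤ 0 :=
      mul_nonpos_iff.mpr (Or.inl ⟨le_of_lt hA, h3⟩)
    nlinarith [Complex.abs.nonneg (conj' w * a - 1), Complex.abs.nonneg (w - a)]
  have hwa' : 0 < Complex.abs (w - a) := by
    simpa [Complex.abs.pos_iff] using hwa
  rw [div_le_div_iff₀ (by positivity) hA]
  calc Complex.abs (conj' w * a - 1) * (Complex.abs w ^ 2 - 1)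
      ≤ Complex.abs (w - a) * (Complex.abs w ^ 2 - 1) := by nlinarith
    _ ≤ 1 * (Complex.abs (w - a) * (Complex.abs w ^ 2 - 1)) := le_of_eq (by ring)

/-- `1/(w-ζ)` with `|ζ| > 1` lies strictly outside that ball. -/
lemma not_mem_ball_of_one_lt {w ζ : ℂ} (hw : 1 < Complex.abs w) (hζ : 1 < Complex.abs ζ)
    (hne : w ≠ ζ) :
    1 / (Complex.abs w ^ 2 - 1)
      < Complex.abs ((w - ζ)⁻¹ - conj' w / (w * conj' w - 1)) := by
  have hA : (0:ℝ) < Complex.abs w ^ 2 - 1 := by nlinarith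
  have hwa : w - ζ ≠ 0 := sub_ne_zero.mpr hne
  have hD := denom_ne_zero w hw
  have h1 : (w - ζ)⁻¹ - conj' w / (w * conj' w - 1)
      = (conj' w * ζ - 1) / ((w - ζ) * (w * conj' w - 1)) := by
    field_simp
    ring
  rw [h1, map_div₀, map_mul, abs_mul_conj_sub_one w hw]
  have hnum : Complex.abs (w - ζ) < Complex.abs (conj' w * ζ - 1) := by
    have := abs_sq_identity w ζ
    have h3 : 0 < Complex.abs ζ ^ 2 - 1 := by nlinarith [Complex.abs.nonneg ζ]
    have h2 : 0 < (Complex.abs w ^ 2 - 1) * (Complex.abs ζ ^ 2 - 1) := mul_pos hA h3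
    nlinarith [Complex.abs.nonneg (conj' w * ζ - 1), Complex.abs.nonneg (w - ζ)]
  have hwa' : 0 < Complex.abs (w - ζ) := by
    simpa [Complex.abs.pos_iff] using hwa
  rw [div_lt_div_iff₀ hA (by positivity)]
  nlinarith

/-- also the origin lies strictly outside the ball -/
lemma zero_not_mem_ball {w : ℂ} (hw : 1 < Complex.abs w) :
    1 / (Complex.abs w ^ 2 - 1)
      < Complex.abs ((0:ℂ) - conj' w / (w * conj' w - 1)) := by
  have hA : (0:ℝ) < Complex.abs w ^ 2 - 1 := by nlinarith
  have hD := denom_ne_zero w hw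
  rw [zero_sub, map_neg_eq_map, map_div₀, abs_mul_conj_sub_one w hw]
  rw [div_lt_div_iff₀ hA hA]
  have : Complex.abs (conj' w) = Complex.abs w := by simp
  rw [this]
  nlinarith



lemma prod_eval (s : Multiset ℂ) (w : ℂ) :
    ((s.map fun a => X - C a).prod).eval w = (s.map fun a => w - a).prod := by
  rw [eval_multiset_prod, Multiset.map_map]
  congr 1
  apply Multiset.map_congr rfl
  intro a _
  simp

lemma prod_eval_ne_zero (s : Multiset ℂ) (w : ℂ) (hs : ∀ a ∈ s, w ≠ a) :
    ((s.map fun a => X - C a).prod).eval w ≠ 0 := by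
  rw [prod_eval]
  apply Multiset.prod_ne_zero
  intro h0
  obtain ⟨a, ha, ha0⟩ := Multiset.mem_map.mp h0
  exact hs a ha (by linear_combination ha0)

lemma deriv_prod_eval (s : Multiset ℂ) (w : ℂ) (hs : ∀ a ∈ s, w ≠ a) :
    (derivative (s.map fun a => X - C a).prod).eval w
      = ((s.map fun a => X - C a).prod).eval w * (s.map fun a => (w - a)⁻¹).sum := by
  induction s using Multiset.induction_on with
  | empty => simp
  | cons a t ih =>
    have hwa : w - a ≠ 0 := sub_ne_zero.mpr (hs a (Multiset.mem_cons_self a t))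
    have ht : ∀ b ∈ t, w ≠ b := fun b hb => hs b (Multiset.mem_cons_of_mem hb)
    simp only [Multiset.map_cons, Multiset.prod_cons, Multiset.sum_cons, derivative_mul,
      eval_add, eval_mul, eval_sub, eval_X, eval_C, derivative_sub, derivative_X,
      derivative_C, sub_zero, eval_one, one_mul]
    rw [ih ht, prod_eval]
    field_simp

/-- key estimate : a sum of `card s` points of the ball can never equal
`card s` times a point outside the ball. -/
lemma sum_inv_ne (s : Multiset ℂ) (w v : ℂ) (hw : 1 < Complex.abs w)
    (hs : ∀ a ∈ s, Complex.abs a ≤ 1) (hcard : s ≠ 0)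
    (hv : 1 / (Complex.abs w ^ 2 - 1)
        < Complex.abs (v - conj' w / (w * conj' w - 1))) :
    (s.map fun a => (w - a)⁻¹).sum ≠ (Multiset.card s : ℂ) * v := by
  intro heq
  set c0 : ℂ := conj' w / (w * conj' w - 1) with hc0
  set r : ℝ := 1 / (Complex.abs w ^ 2 - 1) with hr
  have h1 : (s.map fun a => (w - a)⁻¹ - c0).sum
      = (s.map fun a => (w - a)⁻¹).sum - (Multiset.card s : ℂ) * c0 := by
    rw [Multiset.sum_map_sub]
    congr 1
    rw [Multiset.map_const', Multiset.sum_replicate, nsmul_eq_mul]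
  have h2 : Complex.abs ((s.map fun a => (w - a)⁻¹).sum - (Multiset.card s : ℂ) * c0)
      ≤ (Multiset.card s : ℝ) * r := by
    rw [← h1]
    calc Complex.abs ((s.map fun a => (w - a)⁻¹ - c0).sum)
        ≤ ((s.map fun a => (w - a)⁻¹ - c0).map Complex.abs).sum := by
          exact norm_multiset_sum_le (s.map fun a => (w - a)⁻¹ - c0)
      _ = (s.map fun a => Complex.abs ((w - a)⁻¹ - c0)).sum := by rw [Multiset.map_map]; rfl
      _ ≤ (s.map fun _ => r).sum := by
          apply Multiset.sum_map_le_sum_map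
          intro a ha
          exact mem_ball_of_abs_le hw (hs a ha)
      _ = (Multiset.card s : ℝ) * r := by
          rw [Multiset.map_const', Multiset.sum_replicate, nsmul_eq_mul]
  rw [heq] at h2
  have h3 : (Multiset.card s : ℂ) * v - (Multiset.card s : ℂ) * c0
      = (Multiset.card s : ℂ) * (v - c0) := by ring
  rw [h3, map_mul] at h2
  have hcard' : 0 < (Multiset.card s : ℝ) := by
    have : Multiset.card s ≠ 0 := by simpa using hcard
    positivity
  have : Complex.abs ((Multiset.card s : ℂ)) = (Multiset.card s : ℝ) := by
    simp
  rw [this] at h2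
  nlinarith

lemma roots_card_eq (f : Polynomial ℂ) : Multiset.card f.roots = f.natDegree :=
  splits_iff_card_roots.mp (IsAlgClosed.splits f)

lemma f_factor (f : Polynomial ℂ) :
    f = C f.leadingCoeff * (f.roots.map fun a => X - C a).prod :=
  (C_leadingCoeff_mul_prod_multiset_X_sub_C (roots_card_eq f)).symm

lemma eval_ne_zero_of_roots {f : Polynomial ℂ} (hf : f ≠ 0)
    (hroots : ∀ a ∈ f.roots, Complex.abs a ≤ 1) {w : ℂ} (hw : 1 < Complex.abs w) :
    f.eval w ≠ 0 := by
  intro h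
  have := hroots w ((mem_roots hf).mpr h)
  linarith

lemma roots_not_near (f : Polynomial ℂ)
    (hroots : ∀ a ∈ f.roots, Complex.abs a ≤ 1) {w : ℂ} (hw : 1 < Complex.abs w) :
    ∀ a ∈ f.roots, w ≠ a := by
  intro a ha h
  have := hroots a ha
  rw [← h] at this
  linarith

theorem laguerre {f : Polynomial ℂ} (hf : f ≠ 0) (hd : 1 ≤ f.natDegree)
    (hroots : ∀ a ∈ f.roots, Complex.abs a ≤ 1)
    {w ζ : ℂ} (hw : 1 < Complex.abs w) (hζ : 1 < Complex.abs ζ) :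
    (f.natDegree : ℂ) * f.eval w + (ζ - w) * (derivative f).eval w ≠ 0 := by
  intro heq
  have hfw : f.eval w ≠ 0 := eval_ne_zero_of_roots hf hroots hw
  by_cases hwζ : w = ζ
  · rw [← hwζ, sub_self, zero_mul, add_zero, mul_eq_zero] at heq
    rcases heq with h | h
    · have : f.natDegree = 0 := by exact_mod_cast h
      omega
    · exact hfw h
  · -- main case
    have hne : ∀ a ∈ f.roots, w ≠ a := roots_not_near f hroots hw
    have hfac := f_factor f
    have hlc : f.leadingCoeff ≠ 0 := leadingCoeff_ne_zero.mpr hf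
    have hev : f.eval w = f.leadingCoeff * ((f.roots.map fun a => X - C a).prod).eval w := by
      conv_lhs => rw [hfac]
      simp
    have hdev : (derivative f).eval w
        = f.leadingCoeff * ((f.roots.map fun a => X - C a).prod).eval w
            * (f.roots.map fun a => (w - a)⁻¹).sum := by
      conv_lhs => rw [hfac]
      rw [derivative_C_mul, eval_C_mul, deriv_prod_eval _ _ hne]
      ring
    have hpe : ((f.roots.map fun a => X - C a).prod).eval w ≠ 0 := prod_eval_ne_zero _ _ hne
    have hwζ' : w - ζ ≠ 0 := sub_ne_zero.mpr hwζ
    have hL : f.leadingCoeff * ((f.roots.map fun a => X - C a).prod).eval w ≠ 0 :=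
      mul_ne_zero hlc hpe
    have hsum : (f.roots.map fun a => (w - a)⁻¹).sum
        = (Multiset.card f.roots : ℂ) * (w - ζ)⁻¹ := by
      rw [roots_card_eq]
      have h5 : (ζ - w) * (f.leadingCoeff * ((f.roots.map fun a => X - C a).prod).eval w
          * (f.roots.map fun a => (w - a)⁻¹).sum) = -((f.natDegree : ℂ) * f.eval w) := by
        rw [← hdev]; linear_combination heq
      rw [hev] at h5
      have h6 : (f.leadingCoeff * ((f.roots.map fun a => X - C a).prod).eval w)
          * ((ζ - w) * (f.roots.map fun a => (w - a)⁻¹).sum)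
          = (f.leadingCoeff * ((f.roots.map fun a => X - C a).prod).eval w)
            * (-(f.natDegree : ℂ)) := by linear_combination h5
      have h7 := mul_left_cancel₀ hL h6
      rw [eq_mul_inv_iff_mul_eq₀ hwζ']
      linear_combination -h7
    have hcard : f.roots ≠ 0 := by
      intro h0
      have := roots_card_eq f
      rw [h0] at this
      simp at this
      omega
    exact sum_inv_ne f.roots w ((w - ζ)⁻¹) hw hroots hcard
      (not_mem_ball_of_one_lt hw hζ hwζ) hsum

theorem deriv_ne_zero {f : Polynomial ℂ} (hf : f ≠ 0) (hd : 1 ≤ f.natDegree)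
    (hroots : ∀ a ∈ f.roots, Complex.abs a ≤ 1)
    {w : ℂ} (hw : 1 < Complex.abs w) :
    (derivative f).eval w ≠ 0 := by
  intro heq
  have hne : ∀ a ∈ f.roots, w ≠ a := roots_not_near f hroots hw
  have hfac := f_factor f
  have hlc : f.leadingCoeff ≠ 0 := leadingCoeff_ne_zero.mpr hf
  have hpe : ((f.roots.map fun a => X - C a).prod).eval w ≠ 0 := prod_eval_ne_zero _ _ hne
  have hdev : (derivative f).eval w
      = f.leadingCoeff * ((f.roots.map fun a => X - C a).prod).eval w
          * (f.roots.map fun a => (w - a)⁻¹).sum := by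
    conv_lhs => rw [hfac]
    rw [derivative_C_mul, eval_C_mul, deriv_prod_eval _ _ hne]
    ring
  rw [hdev] at heq
  have hsum : (f.roots.map fun a => (w - a)⁻¹).sum = (Multiset.card f.roots : ℂ) * 0 := by
    rw [mul_zero]
    rcases mul_eq_zero.mp heq with h | h
    · rcases mul_eq_zero.mp h with h' | h'
      · exact absurd h' hlc
      · exact absurd h' hpe
    · exact h
  have hcard : f.roots ≠ 0 := by
    intro h0
    have := roots_card_eq f
    rw [h0] at this
    simp at this
    omega
  exact sum_inv_ne f.roots w 0 hw hroots hcard (zero_not_mem_ball hw) hsum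


lemma esymm_one' (s : Multiset ℂ) : s.esymm 1 = s.sum := by
  rw [Multiset.esymm, Multiset.powersetCard_one, Multiset.map_map]
  simp

lemma abs_multiset_sum_le (s : Multiset ℂ) (h : ∀ a ∈ s, Complex.abs a ≤ 1) :
    Complex.abs s.sum ≤ (Multiset.card s : ℝ) := by
  calc Complex.abs s.sum ≤ (s.map Complex.abs).sum := by
        exact norm_multiset_sum_le s
    _ ≤ (s.map fun _ => (1:ℝ)).sum := Multiset.sum_map_le_sum_map _ _ h
    _ = (Multiset.card s : ℝ) := by
        rw [Multiset.map_const', Multiset.sum_replicate, nsmul_eq_mul, mul_one]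

/-- Vieta-type bound : `|a_{k-1}| ≤ k |a_k|` for a polynomial with all roots in the disk. -/
lemma abs_coeff_sub_one_le {f : Polynomial ℂ} (hf : f ≠ 0) (hk : 1 ≤ f.natDegree)
    (hroots : ∀ a ∈ f.roots, Complex.abs a ≤ 1) :
    Complex.abs (f.coeff (f.natDegree - 1))
      ≤ (f.natDegree : ℝ) * Complex.abs f.leadingCoeff := by
  have hfac := f_factor f
  have hcard := roots_card_eq f
  have hc : f.coeff (f.natDegree - 1)
      = f.leadingCoeff * ((f.roots.map fun a => X - C a).prod).coeff (f.natDegree - 1) := by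
    have h := congrArg (fun p => coeff p (f.natDegree - 1)) hfac
    simpa only [coeff_C_mul] using h
  have hco := Multiset.prod_X_sub_C_coeff f.roots
    (k := f.natDegree - 1) (by rw [hcard]; omega)
  have h1 : Multiset.card f.roots - (f.natDegree - 1) = 1 := by rw [hcard]; omega
  rw [h1, esymm_one', pow_one] at hco
  rw [hc, hco, map_mul]
  have := abs_multiset_sum_le f.roots hroots
  rw [hcard] at this
  calc Complex.abs f.leadingCoeff * Complex.abs (-1 * f.roots.sum)
      = Complex.abs f.leadingCoeff * Complex.abs f.roots.sum := by
        rw [neg_one_mul, map_neg_eq_map]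
    _ ≤ Complex.abs f.leadingCoeff * (f.natDegree : ℝ) := by
        have h0 := Complex.abs.nonneg f.leadingCoeff
        nlinarith
    _ = (f.natDegree : ℝ) * Complex.abs f.leadingCoeff := by ring

/-- the polar derivative operator (with level `k`) -/
noncomputable def pd (k : ℕ) (ζ : ℂ) (f : Polynomial ℂ) : Polynomial ℂ :=
  C (k : ℂ) * f + (C ζ - X) * derivative f

lemma pd_eval (k : ℕ) (ζ : ℂ) (f : Polynomial ℂ) (w : ℂ) :
    (pd k ζ f).eval w = (k : ℂ) * f.eval w + (ζ - w) * (derivative f).eval w := by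
  simp [pd]

lemma pd_derivative (k : ℕ) (ζ : ℂ) (f : Polynomial ℂ) :
    derivative (pd k ζ f)
      = C ((k : ℂ) - 1) * derivative f + (C ζ - X) * derivative (derivative f) := by
  simp only [pd, derivative_add, derivative_mul, derivative_C, derivative_sub, derivative_X,
    zero_mul, zero_add, zero_sub, map_sub, C_1]
  ring

lemma pd_coeff_succ (k : ℕ) (ζ : ℂ) (f : Polynomial ℂ) (i : ℕ) :
    (pd k ζ f).coeff (i + 1)
      = ((k : ℂ) - (i + 1)) * f.coeff (i + 1) + ζ * (i + 2) * f.coeff (i + 2) := by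
  simp only [pd, coeff_add, coeff_C_mul, sub_mul, coeff_sub, coeff_X_mul, coeff_derivative]
  push_cast
  ring

lemma pd_coeff_zero (k : ℕ) (ζ : ℂ) (f : Polynomial ℂ) :
    (pd k ζ f).coeff 0 = (k : ℂ) * f.coeff 0 + ζ * f.coeff 1 := by
  simp only [pd, coeff_add, coeff_C_mul, sub_mul, coeff_sub, coeff_derivative]
  have : (X * derivative f).coeff 0 = 0 := by
    rw [mul_comm, coeff_mul_X_zero]
  rw [this]
  simp

lemma pd_coeff_low (k : ℕ) (ζ : ℂ) (f : Polynomial ℂ) (hk : 1 ≤ k) :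
    (pd k ζ f).coeff (k - 1)
      = ((k : ℂ) - (k - 1 : ℕ)) * f.coeff (k - 1) + ζ * (k : ℂ) * f.coeff k := by
  rcases Nat.exists_eq_add_of_le hk with ⟨i, rfl⟩
  rcases Nat.eq_zero_or_pos i with rfl | hi
  · simpa using pd_coeff_zero (1 + 0) ζ f
  · rcases Nat.exists_eq_add_of_le hi with ⟨j, rfl⟩
    have h1 : 1 + (1 + j) - 1 = j + 1 := by omega
    rw [h1, pd_coeff_succ]
    have h2 : j + 1 + 1 = 1 + (1 + j) := by omega
    rw [h2]
    push_cast
    ring_nf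

/-- Laguerre's theorem, structural form: the polar derivative of a polynomial of
exact degree `k ≥ 1` with all roots in the closed unit disk, w.r.t. a pole of
modulus `> 1`, is nonzero, has exact degree `k - 1`, and has all roots in the disk. -/
lemma pd_props {f : Polynomial ℂ} (hf : f ≠ 0) (hk : 1 ≤ f.natDegree)
    (hroots : ∀ a ∈ f.roots, Complex.abs a ≤ 1) {ζ : ℂ} (hζ : 1 < Complex.abs ζ) :
    pd f.natDegree ζ f ≠ 0 ∧ (pd f.natDegree ζ f).natDegree = f.natDegree - 1 ∧
      ∀ a ∈ (pd f.natDegree ζ f).roots, Complex.abs a ≤ 1 := by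
  set k := f.natDegree with hkdef
  have hlc : f.leadingCoeff ≠ 0 := leadingCoeff_ne_zero.mpr hf
  have hlcabs : 0 < Complex.abs f.leadingCoeff := Complex.abs.pos hlc
  -- coefficient k-1 is nonzero
  have hbound := abs_coeff_sub_one_le hf hk hroots
  have hco := pd_coeff_low k ζ f hk
  have hcast : ((k : ℂ) - (k - 1 : ℕ)) = 1 := by
    have : (k - 1 : ℕ) = ((k : ℂ) - 1) := by
      push_cast [Nat.cast_sub hk]
      ring
    rw [this]; ring
  rw [hcast, one_mul] at hco
  have hlow : (pd k ζ f).coeff (k - 1) ≠ 0 := by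
    rw [hco]
    intro h0
    have h1 : Complex.abs (ζ * (k : ℂ) * f.coeff k) = Complex.abs (f.coeff (k - 1)) := by
      have : ζ * (k : ℂ) * f.coeff k = -f.coeff (k - 1) := by linear_combination h0
      rw [this, map_neg_eq_map]
    rw [map_mul, map_mul] at h1
    have h2 : Complex.abs ((k : ℂ)) = (k : ℝ) := by simp
    rw [h2] at h1
    have h3 : f.coeff k = f.leadingCoeff := rfl
    rw [h3] at h1
    have hkpos : (0:ℝ) < (k:ℝ) := by exact_mod_cast hk
    rw [← hkdef] at hbound
    nlinarith [mul_pos hkpos hlcabs, h1, hbound,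
      mul_lt_mul_of_pos_right hζ (mul_pos hkpos hlcabs)]
  -- degree bound from above
  have htop : ∀ j, k - 1 < j → (pd k ζ f).coeff j = 0 := by
    intro j hj
    obtain ⟨i, rfl⟩ : ∃ i, j = i + 1 := ⟨j - 1, by omega⟩
    rw [pd_coeff_succ]
    have hik : k ≤ i + 1 := by omega
    by_cases hieq : i + 1 = k
    · have h5 : f.coeff (i + 2) = 0 := coeff_eq_zero_of_natDegree_lt (by omega)
      have h6 : ((i:ℂ) + 1) = (k:ℂ) := by exact_mod_cast hieq
      have h7 : ((k:ℂ) - ((i:ℂ) + 1)) = 0 := by rw [h6]; ring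
      rw [h5, h7]
      ring
    · have h5 : f.coeff (i + 2) = 0 := coeff_eq_zero_of_natDegree_lt (by omega)
      have h4 : f.coeff (i + 1) = 0 := coeff_eq_zero_of_natDegree_lt (by omega)
      rw [h4, h5]
      ring
  have hne : pd k ζ f ≠ 0 := fun h0 => hlow (by rw [h0]; simp)
  have hdeg : (pd k ζ f).natDegree = k - 1 := by
    apply le_antisymm
    · exact natDegree_le_iff_coeff_eq_zero.mpr htop
    · exact le_natDegree_of_ne_zero hlow
  refine ⟨hne, hdeg, ?_⟩
  intro a ha
  by_contra hno
  push_neg at hno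
  have haroot : (pd k ζ f).eval a = 0 := by
    have := (mem_roots hne).mp ha
    exact this
  have := laguerre hf hk hroots (w := a) hno hζ
  rw [pd_eval] at haroot
  exact this haroot

-- ==== part 4 : Rahman's theorem ====

lemma deriv_facts {f : Polynomial ℂ} (hf : f ≠ 0) (hk : 1 ≤ f.natDegree)
    (hroots : ∀ a ∈ f.roots, Complex.abs a ≤ 1) :
    derivative f ≠ 0 ∧ (derivative f).natDegree = f.natDegree - 1 ∧
      ∀ a ∈ (derivative f).roots, Complex.abs a ≤ 1 := by
  have hco : (derivative f).coeff (f.natDegree - 1) ≠ 0 := by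
    rw [coeff_derivative]
    have h1 : f.natDegree - 1 + 1 = f.natDegree := by omega
    rw [h1]
    apply mul_ne_zero (leadingCoeff_ne_zero.mpr hf)
    have h2 : ((f.natDegree - 1 : ℕ) : ℂ) + 1 = (f.natDegree : ℂ) := by
      exact_mod_cast congrArg (Nat.cast : ℕ → ℂ) h1
    rw [h2]
    exact Nat.cast_ne_zero.mpr (by omega)
  have hne : derivative f ≠ 0 := fun h0 => hco (by rw [h0]; simp)
  refine ⟨hne, le_antisymm (natDegree_derivative_le f) (le_natDegree_of_ne_zero hco), ?_⟩
  intro a ha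
  by_contra hno
  push_neg at hno
  exact deriv_ne_zero hf hk hroots hno ((mem_roots hne).mp ha)

lemma pd_props' {f : Polynomial ℂ} (hf : f ≠ 0) {k : ℕ} (hdeg : f.natDegree = k)
    (hk : 1 ≤ k) (hroots : ∀ a ∈ f.roots, Complex.abs a ≤ 1) {ζ : ℂ}
    (hζ : 1 < Complex.abs ζ) :
    pd k ζ f ≠ 0 ∧ (pd k ζ f).natDegree = k - 1 ∧
      ∀ a ∈ (pd k ζ f).roots, Complex.abs a ≤ 1 := by
  subst hdeg
  exact pd_props hf hk hroots hζ

lemma laguerre' {f : Polynomial ℂ} (hf : f ≠ 0) {k : ℕ} (hdeg : f.natDegree = k)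
    (hk : 1 ≤ k) (hroots : ∀ a ∈ f.roots, Complex.abs a ≤ 1)
    {w ζ : ℂ} (hw : 1 < Complex.abs w) (hζ : 1 < Complex.abs ζ) :
    (k : ℂ) * f.eval w + (ζ - w) * (derivative f).eval w ≠ 0 := by
  subst hdeg
  exact laguerre hf hk hroots hw hζ

lemma pd_derivative_eval (k : ℕ) (ζ : ℂ) (f : Polynomial ℂ) (w : ℂ) :
    (derivative (pd k ζ f)).eval w
      = ((k : ℂ) - 1) * (derivative f).eval w + (ζ - w) * (derivative (derivative f)).eval w := by
  rw [pd_derivative]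
  simp

lemma Bop_eval (n : ℕ) (l0 l1 l2 : ℂ) (f : Polynomial ℂ) (w : ℂ) :
    (Bop n l0 l1 l2 f).eval w
      = l0 * f.eval w + l1 * ((n : ℂ)/2) * (w * (derivative f).eval w)
        + (l2/2 * ((n : ℂ)/2)^2) * (w^2 * (derivative (derivative f)).eval w) := by
  simp [Bop]

lemma hB_at_half {n : ℕ} (hn : 1 ≤ n) {l0 l1 l2 : ℂ} (hB : AdmissibleParams n l0 l1 l2)
    (h : l0 + l1 * (n : ℂ) * ((n : ℂ)/2)
        + l2 * ((n : ℂ) * ((n : ℂ) - 1) / 2) * ((n : ℂ)/2)^2 = 0) : False := by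
  have h2 := hB ((n : ℂ)/2) h
  rw [sub_self] at h2
  simp only [norm_zero] at h2
  have h3 : Complex.abs ((n : ℂ)/2) = 0 := le_antisymm h2 (Complex.abs.nonneg _)
  have h4 : ((n : ℂ)/2) = 0 := by
    rwa [Complex.abs.eq_zero] at h3
  have h5 : n = 0 := by
    field_simp at h4
    exact_mod_cast h4
  omega

lemma Lam_ne_zero {n : ℕ} (hn : 1 ≤ n) {l0 l1 l2 : ℂ} (hB : AdmissibleParams n l0 l1 l2) :
    Lam n l0 l1 l2 ≠ 0 := by
  intro h
  apply hB_at_half hn hB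
  rw [Lam] at h
  linear_combination h

lemma zeta_mod {n : ℕ} {l0 l1 l2 : ℂ} (hB : AdmissibleParams n l0 l1 l2)
    {t : ℂ} (ht : t ≠ 0)
    (hroot : l0 + l1 * (n : ℂ) * t + l2 * ((n : ℂ) * ((n : ℂ) - 1) / 2) * t^2 = 0)
    {w : ℂ} (hw : 1 < Complex.abs w) :
    1 < Complex.abs (w * (1 - (n : ℂ)/(2*t))) := by
  have h1 : (1 - (n : ℂ)/(2*t)) = (t - (n : ℂ)/2)/t := by
    field_simp
  rw [map_mul, h1, map_div₀]
  have h2 := hB t hroot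
  have h3 : 0 < Complex.abs t := Complex.abs.pos ht
  have h4 : 1 ≤ Complex.abs (t - (n : ℂ)/2) / Complex.abs t := (one_le_div h3).mpr h2
  nlinarith

/-- the main double-polar-derivative case of Rahman's theorem -/
lemma double_case {n : ℕ} (hn2 : 2 ≤ n) {l0 l1 l2 : ℂ} (hB : AdmissibleParams n l0 l1 l2)
    (hl0 : l0 ≠ 0) (hl2 : l2 ≠ 0) {W : Polynomial ℂ} (hW : W ≠ 0) (hdeg : W.natDegree = n)
    (hroots : ∀ a ∈ W.roots, Complex.abs a ≤ 1) {w : ℂ} (hw : 1 < Complex.abs w) :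
    l0 * W.eval w + l1 * ((n : ℂ)/2) * (w * (derivative W).eval w)
      + (l2/2 * ((n : ℂ)/2)^2) * (w^2 * (derivative (derivative W)).eval w) ≠ 0 := by
  intro heq
  have hn0 : (n : ℂ) ≠ 0 := Nat.cast_ne_zero.mpr (by omega)
  have hn1 : ((n : ℂ) - 1) ≠ 0 := by
    have : ((n - 1 : ℕ) : ℂ) = (n : ℂ) - 1 := by
      push_cast [Nat.cast_sub (by omega : 1 ≤ n)]; ring
    rw [← this]
    exact Nat.cast_ne_zero.mpr (by omega)
  set S : ℂ := l1 * (n : ℂ)^2 / (2 * l0) with hS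
  set Pp : ℂ := l2 * (n : ℂ)^3 * ((n : ℂ) - 1) / (8 * l0) with hPp
  obtain ⟨e, he⟩ := IsAlgClosed.exists_pow_nat_eq (S^2 - 4*Pp) (n := 2) (by norm_num)
  set τ1 : ℂ := (S + e)/2 with hτ1
  set τ2 : ℂ := (S - e)/2 with hτ2
  have hq1 : τ1^2 - S*τ1 + Pp = 0 := by
    rw [hτ1]
    linear_combination ((1:ℂ)/4) * he
  have hq2 : τ2^2 - S*τ2 + Pp = 0 := by
    rw [hτ2]
    linear_combination ((1:ℂ)/4) * he
  have hPne : Pp ≠ 0 := by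
    rw [hPp]
    apply div_ne_zero
    · exact mul_ne_zero (mul_ne_zero hl2 (pow_ne_zero 3 hn0)) hn1
    · intro h0
      apply hl0
      simpa using h0
  have hprod : τ1 * τ2 = Pp := by
    rw [hτ1, hτ2]
    linear_combination (-(1:ℂ)/4) * he
  have hτ1ne : τ1 ≠ 0 := by
    intro h0; apply hPne; rw [← hprod, h0, zero_mul]
  have hτ2ne : τ2 ≠ 0 := by
    intro h0; apply hPne; rw [← hprod, h0, mul_zero]
  -- the corresponding roots of U
  set t1 : ℂ := -(n : ℂ)/(2*τ1) with ht1
  set t2 : ℂ := -(n : ℂ)/(2*τ2) with ht2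
  have ht1ne : t1 ≠ 0 := by
    rw [ht1]; exact div_ne_zero (neg_ne_zero.mpr hn0) (by simp [hτ1ne])
  have ht2ne : t2 ≠ 0 := by
    rw [ht2]; exact div_ne_zero (neg_ne_zero.mpr hn0) (by simp [hτ2ne])
  have hU1 : l0 + l1 * (n : ℂ) * t1 + l2 * ((n : ℂ) * ((n : ℂ) - 1) / 2) * t1^2 = 0 := by
    have key : τ1^2 * (l0 + l1 * (n : ℂ) * t1 + l2 * ((n : ℂ) * ((n : ℂ) - 1) / 2) * t1^2)
        = l0 * (τ1^2 - S*τ1 + Pp) := by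
      rw [ht1, hS, hPp]
      field_simp
      ring
    rw [hq1, mul_zero] at key
    exact (mul_eq_zero.mp key).resolve_left (pow_ne_zero 2 hτ1ne)
  have hU2 : l0 + l1 * (n : ℂ) * t2 + l2 * ((n : ℂ) * ((n : ℂ) - 1) / 2) * t2^2 = 0 := by
    have key : τ2^2 * (l0 + l1 * (n : ℂ) * t2 + l2 * ((n : ℂ) * ((n : ℂ) - 1) / 2) * t2^2)
        = l0 * (τ2^2 - S*τ2 + Pp) := by
      rw [ht2, hS, hPp]
      field_simp
      ring
    rw [hq2, mul_zero] at key
    exact (mul_eq_zero.mp key).resolve_left (pow_ne_zero 2 hτ2ne)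
  set ζ1 : ℂ := w * (1 + τ1) with hζ1def
  set ζ2 : ℂ := w * (1 + τ2) with hζ2def
  have hzw1 : w * (1 - (n : ℂ)/(2*t1)) = ζ1 := by
    rw [hζ1def, ht1]
    field_simp
    ring
  have hzw2 : w * (1 - (n : ℂ)/(2*t2)) = ζ2 := by
    rw [hζ2def, ht2]
    field_simp
    ring
  have hζ1 : 1 < Complex.abs ζ1 := by
    rw [← hzw1]; exact zeta_mod hB ht1ne hU1 hw
  have hζ2 : 1 < Complex.abs ζ2 := by
    rw [← hzw2]; exact zeta_mod hB ht2ne hU2 hw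
  -- first polar derivative
  obtain ⟨hf1ne, hf1deg, hf1roots⟩ := pd_props' hW hdeg (by omega) hroots hζ1
  -- second application : Laguerre on f1
  have hL := laguerre' hf1ne hf1deg (by omega) hf1roots hw hζ2
  apply hL
  have hcast : ((n - 1 : ℕ) : ℂ) = (n : ℂ) - 1 := by
    push_cast [Nat.cast_sub (by omega : 1 ≤ n)]; ring
  rw [hcast, pd_eval, pd_derivative_eval]
  have hl0S : l0 * S = l1 * (n : ℂ)^2 / 2 := by rw [hS]; field_simp
  have hl0P : l0 * Pp = l2 * (n : ℂ)^3 * ((n : ℂ) - 1) / 8 := by rw [hPp]; field_simp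
  have hA : l0 * ((ζ1 - w) + (ζ2 - w)) = l1 * (n : ℂ)^2 * w / 2 := by
    rw [hζ1def, hζ2def, hτ1, hτ2]
    linear_combination w * hl0S
  have hB2 : l0 * ((ζ1 - w) * (ζ2 - w)) = l2 * (n : ℂ)^3 * ((n : ℂ) - 1) * w^2 / 8 := by
    rw [hζ1def, hζ2def]
    linear_combination (w^2 * l0) * hprod + w^2 * hl0P
  apply mul_left_cancel₀ hl0
  rw [mul_zero]
  linear_combination ((n : ℂ) * ((n : ℂ) - 1)) * heq
    + (((n : ℂ) - 1) * (derivative W).eval w) * hA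
    + (derivative (derivative W)).eval w * hB2

theorem rahman {n : ℕ} (hn : 1 ≤ n) {l0 l1 l2 : ℂ} (hB : AdmissibleParams n l0 l1 l2)
    {W : Polynomial ℂ} (hW : W ≠ 0) (hdeg : W.natDegree = n)
    (hroots : ∀ a ∈ W.roots, Complex.abs a ≤ 1)
    {w : ℂ} (hw : 1 < Complex.abs w) :
    (Bop n l0 l1 l2 W).eval w ≠ 0 := by
  rw [Bop_eval]
  intro heq
  have hw0 : w ≠ 0 := by
    intro h; rw [h] at hw; simp at hw; linarith
  have hn0 : (n : ℂ) ≠ 0 := Nat.cast_ne_zero.mpr (by omega)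
  have hWw : W.eval w ≠ 0 := eval_ne_zero_of_roots hW hroots hw
  have hW1 : 1 ≤ W.natDegree := by omega
  have hd1 := deriv_ne_zero hW hW1 hroots hw
  rcases Nat.lt_or_ge n 2 with hn2 | hn2
  · -- n = 1
    have hn1 : n = 1 := by omega
    subst hn1
    have hW2 : derivative (derivative W) = 0 := by
      have h1 : (derivative W).natDegree ≤ 0 := by
        have := natDegree_derivative_le W
        omega
      rw [eq_C_of_natDegree_le_zero h1]
      simp
    rw [hW2] at heq
    simp only [eval_zero, mul_zero] at heq
    by_cases hl1 : l1 = 0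
    · have hl0 : l0 ≠ 0 := by
        intro h0
        apply hB_at_half (le_refl 1) hB
        rw [h0, hl1]
        push_cast
        ring
      apply hWw
      have h2 : l0 * W.eval w = 0 := by
        rw [hl1] at heq
        linear_combination heq
      exact (mul_eq_zero.mp h2).resolve_left hl0
    · by_cases hl0 : l0 = 0
      · apply hd1
        have h2 : l1 * ((1 : ℕ) : ℂ)/2 * w * (derivative W).eval w = 0 := by
          rw [hl0] at heq
          linear_combination heq
        have h3 : l1 * ((1 : ℕ) : ℂ)/2 * w ≠ 0 := by
          push_cast
          field_simp
          exact div_ne_zero (mul_ne_zero hl1 hw0) two_ne_zero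
        rcases mul_eq_zero.mp h2 with h | h
        · exact absurd h h3
        · exact h
      · -- single polar derivative, level 1
        set t : ℂ := -l0/l1 with htd
        have ht0 : t ≠ 0 := by
          rw [htd]; exact div_ne_zero (neg_ne_zero.mpr hl0) hl1
        have hroott : l0 + l1 * ((1:ℕ) : ℂ) * t + l2 * (((1:ℕ) : ℂ) * (((1:ℕ) : ℂ) - 1) / 2) * t^2 = 0 := by
          rw [htd]
          push_cast
          field_simp
          all_goals ring
        have hζ := zeta_mod hB ht0 hroott hw
        have hL := laguerre' hW hdeg (le_refl 1) hroots hw hζ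
        apply hL
        push_cast at *
        have hz2 : l0 * (w * (1 - 1/(2*t)) - w) = l1 * w / 2 := by
          rw [htd]
          field_simp
          ring
        apply mul_left_cancel₀ hl0
        rw [mul_zero]
        linear_combination heq + (derivative W).eval w * hz2
  · -- n ≥ 2
    have hdfacts := deriv_facts hW hW1 hroots
    obtain ⟨hd'ne, hd'deg, hd'roots⟩ := hdfacts
    rw [hdeg] at hd'deg
    have hd2 : (derivative (derivative W)).eval w ≠ 0 := by
      apply deriv_ne_zero hd'ne (by omega) hd'roots hw
    by_cases hl2 : l2 = 0
    · by_cases hl1 : l1 = 0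
      · have hl0 : l0 ≠ 0 := by
          intro h0
          apply hB_at_half (by omega) hB
          rw [h0, hl1, hl2]
          ring
        apply hWw
        have h2 : l0 * W.eval w = 0 := by
          rw [hl1, hl2] at heq
          linear_combination heq
        exact (mul_eq_zero.mp h2).resolve_left hl0
      · by_cases hl0 : l0 = 0
        · apply hd1
          have h2 : (l1 * ((n : ℂ)/2) * w) * (derivative W).eval w = 0 := by
            rw [hl0, hl2] at heq
            linear_combination heq
          have h3 : l1 * ((n : ℂ)/2) * w ≠ 0 := by
            field_simp
            exact div_ne_zero (mul_ne_zero (mul_ne_zero hl1 hn0) hw0) two_ne_zero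
          exact (mul_eq_zero.mp h2).resolve_left h3
        · -- single polar derivative, level n
          set t : ℂ := -l0/(l1 * (n : ℂ)) with htd
          have ht0 : t ≠ 0 := by
            rw [htd]; exact div_ne_zero (neg_ne_zero.mpr hl0) (mul_ne_zero hl1 hn0)
          have hroott : l0 + l1 * (n : ℂ) * t + l2 * ((n : ℂ) * ((n : ℂ) - 1) / 2) * t^2 = 0 := by
            rw [htd, hl2]
            field_simp
            all_goals ring
          have hζ := zeta_mod hB ht0 hroott hw
          have hL := laguerre' hW hdeg (by omega) hroots hw hζ
          apply hL
          have hz2 : l0 * (w * (1 - (n : ℂ)/(2*t)) - w) = l1 * (n : ℂ)^2 * w / 2 := by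
            rw [htd]
            field_simp
            ring
          apply mul_left_cancel₀ hl0
          rw [mul_zero]
          linear_combination (n : ℂ) * heq + (derivative W).eval w * hz2
            - ((n : ℂ) * ((n : ℂ)/2)^2 * (w^2 * (derivative (derivative W)).eval w) / 2) * hl2
    · by_cases hl0 : l0 = 0
      · by_cases hl1 : l1 = 0
        · apply hd2
          have h2 : (l2/2 * ((n : ℂ)/2)^2 * w^2) * (derivative (derivative W)).eval w = 0 := by
            rw [hl0, hl1] at heq
            linear_combination heq
          have h3 : l2/2 * ((n : ℂ)/2)^2 * w^2 ≠ 0 := by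
            field_simp
            exact div_ne_zero (mul_ne_zero (mul_ne_zero hl2 (pow_ne_zero _ hn0)) (pow_ne_zero _ hw0))
              (pow_ne_zero _ two_ne_zero)
          exact (mul_eq_zero.mp h2).resolve_left h3
        · -- single polar derivative on W', level n-1
          have hn1 : ((n : ℂ) - 1) ≠ 0 := by
            have : ((n - 1 : ℕ) : ℂ) = (n : ℂ) - 1 := by
              push_cast [Nat.cast_sub (by omega : 1 ≤ n)]; ring
            rw [← this]
            exact Nat.cast_ne_zero.mpr (by omega)
          set t : ℂ := -2*l1/(l2 * ((n : ℂ) - 1)) with htd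
          have ht0 : t ≠ 0 := by
            rw [htd]
            apply div_ne_zero
            · intro h0
              apply hl1
              simpa using h0
            · exact mul_ne_zero hl2 hn1
          have hroott : l0 + l1 * (n : ℂ) * t + l2 * ((n : ℂ) * ((n : ℂ) - 1) / 2) * t^2 = 0 := by
            rw [htd, hl0]
            field_simp
            ring
          have hζ := zeta_mod hB ht0 hroott hw
          have hL := laguerre' hd'ne hd'deg (by omega) hd'roots hw hζ
          apply hL
          have hcast : ((n - 1 : ℕ) : ℂ) = (n : ℂ) - 1 := by
            push_cast [Nat.cast_sub (by omega : 1 ≤ n)]; ring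
          rw [hcast]
          have hz2 : l1 * (w * (1 - (n : ℂ)/(2*t)) - w) = l2 * (n : ℂ) * ((n : ℂ) - 1) * w / 4 := by
            rw [htd]
            field_simp
            ring
          have hc0 : l1 * (n : ℂ) * w / 2 ≠ 0 := by
            apply div_ne_zero (mul_ne_zero (mul_ne_zero hl1 hn0) hw0) (by norm_num)
          apply mul_left_cancel₀ hc0
          rw [mul_zero]
          linear_combination ((n : ℂ) - 1) * heq
            + ((n : ℂ) * w / 2) * (derivative (derivative W)).eval w * hz2
            - (((n : ℂ) - 1) * W.eval w) * hl0
      · exact double_case hn2 hB hl0 hl2 hW hdeg hroots hw heq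

-- ==== part 5 : dilate / conjRecip / Bop structural lemmas ====

lemma dilate_eval (R : ℝ) (f : Polynomial ℂ) (w : ℂ) :
    (dilate R f).eval w = f.eval ((R : ℂ) * w) := by
  simp [dilate, eval_comp]

lemma dilate_coeff (R : ℝ) (f : Polynomial ℂ) (k : ℕ) :
    (dilate R f).coeff k = (R : ℂ)^k * f.coeff k := by
  induction f using Polynomial.induction_on' with
  | add p q hp hq =>
    simp only [dilate, add_comp] at *
    simp [coeff_add, hp, hq]
    ring
  | monomial j a =>
    simp only [dilate, monomial_comp]
    rw [mul_pow, ← C_pow]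
    rw [← mul_assoc, ← C_mul]
    rw [coeff_C_mul, coeff_X_pow, coeff_monomial]
    by_cases h : j = k
    · subst h; simp [mul_comm]
    · rw [if_neg h, if_neg (fun hh => h hh.symm)]
      simp

lemma dilate_add_C_mul (R : ℝ) (f g : Polynomial ℂ) (β : ℂ) :
    dilate R (f + C β * g) = dilate R f + C β * dilate R g := by
  simp [dilate, add_comp, mul_comp, C_comp]

lemma dilate_sub_C_mul (R : ℝ) (f g : Polynomial ℂ) (β : ℂ) :
    dilate R (f - C β * g) = dilate R f - C β * dilate R g := by
  simp [dilate, sub_comp, mul_comp, C_comp]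

lemma Bop_eval_add_C_mul (n : ℕ) (l0 l1 l2 : ℂ) (f g : Polynomial ℂ) (β : ℂ) (w : ℂ) :
    (Bop n l0 l1 l2 (f + C β * g)).eval w
      = (Bop n l0 l1 l2 f).eval w + β * (Bop n l0 l1 l2 g).eval w := by
  simp only [Bop_eval, derivative_add, derivative_mul, derivative_C, zero_mul, zero_add,
    eval_add, eval_mul, eval_C]
  ring

lemma Bop_eval_sub_C_mul (n : ℕ) (l0 l1 l2 : ℂ) (f g : Polynomial ℂ) (β : ℂ) (w : ℂ) :
    (Bop n l0 l1 l2 (f - C β * g)).eval w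
      = (Bop n l0 l1 l2 f).eval w - β * (Bop n l0 l1 l2 g).eval w := by
  simp only [Bop_eval, derivative_sub, derivative_mul, derivative_C, zero_mul, zero_add,
    eval_sub, eval_mul, eval_C]
  ring

lemma Bop_eval_C (n : ℕ) (l0 l1 l2 : ℂ) (c : ℂ) (w : ℂ) :
    (Bop n l0 l1 l2 (C c)).eval w = l0 * c := by
  simp [Bop_eval]

lemma Bop_eval_C_mul_Xn {n : ℕ} (hn : 1 ≤ n) (l0 l1 l2 : ℂ) (c : ℂ) (w : ℂ) :
    (Bop n l0 l1 l2 (C c * X^n)).eval w = Lam n l0 l1 l2 * c * w^n := by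
  obtain ⟨m, rfl⟩ : ∃ m, n = m + 1 := ⟨n - 1, by omega⟩
  have hd1 : derivative (C c * X^(m+1)) = C (c * (m+1 : ℕ)) * X^m := by
    rw [derivative_C_mul_X_pow]
    simp
  rcases Nat.eq_zero_or_pos m with rfl | hm
  · rw [Bop_eval, hd1]
    have hd2 : derivative (C (c * ((0:ℕ)+1 : ℕ)) * X^0) = 0 := by
      simp
    rw [hd2]
    simp [Lam]
    push_cast
    ring
  · obtain ⟨p, rfl⟩ : ∃ p, m = p + 1 := ⟨m - 1, by omega⟩
    have hd2 : derivative (C (c * (p+1+1 : ℕ)) * X^(p+1))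
        = C (c * (p+1+1 : ℕ) * (p+1 : ℕ)) * X^p := by
      rw [derivative_C_mul_X_pow]
      simp
    rw [Bop_eval, hd1, hd2]
    simp only [eval_mul, eval_C, eval_pow, eval_X, Lam]
    push_cast
    ring

-- conjRecip lemmas
lemma cr_coeff_le {Q : Polynomial ℂ} {n j : ℕ} (hj : j ≤ n) :
    (conjRecip n Q).coeff j = (starRingEnd ℂ) (Q.coeff (n - j)) := by
  rw [conjRecip, coeff_reflect, revAt_le hj, coeff_map]

lemma cr_coeff_gt {Q : Polynomial ℂ} {n j : ℕ} (hQ : Q.natDegree ≤ n) (hj : n < j) :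
    (conjRecip n Q).coeff j = 0 := by
  rw [conjRecip, coeff_reflect]
  have h1 : (revAt n) j = j := by
    unfold revAt
    show revAtFun n j = j
    unfold revAtFun
    rw [if_neg (by omega)]
  rw [h1, coeff_map]
  rw [coeff_eq_zero_of_natDegree_lt (by omega)]
  simp

lemma cr_natDegree_le (Q : Polynomial ℂ) {n : ℕ} (hQ : Q.natDegree ≤ n) :
    (conjRecip n Q).natDegree ≤ n :=
  natDegree_le_iff_coeff_eq_zero.mpr fun _ hm => cr_coeff_gt hQ hm

lemma cr_natDegree {Q : Polynomial ℂ} {n : ℕ} (hQ : Q.natDegree ≤ n)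
    (h0 : Q.coeff 0 ≠ 0) : (conjRecip n Q).natDegree = n := by
  apply le_antisymm (cr_natDegree_le Q hQ)
  apply le_natDegree_of_ne_zero
  rw [cr_coeff_le (le_refl n)]
  simpa using h0

lemma cr_ne_zero {Q : Polynomial ℂ} {n : ℕ} (h0 : Q.coeff 0 ≠ 0) :
    conjRecip n Q ≠ 0 := by
  intro h
  have := congrArg (fun p => coeff p n) h
  simp only [coeff_zero] at this
  rw [cr_coeff_le (le_refl n)] at this
  simp at this
  exact h0 this

lemma cr_eval {Q : Polynomial ℂ} {n : ℕ} (hQ : Q.natDegree ≤ n) {w : ℂ} (hw : w ≠ 0) :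
    (conjRecip n Q).eval w = w^n * (starRingEnd ℂ) (Q.eval ((starRingEnd ℂ) w)⁻¹) := by
  have hdeg : (conjRecip n Q).natDegree < n + 1 := by
    have := cr_natDegree_le Q hQ
    omega
  rw [eval_eq_sum_range' hdeg w]
  have hQdeg : Q.natDegree < n + 1 := by omega
  rw [eval_eq_sum_range' hQdeg (((starRingEnd ℂ) w)⁻¹)]
  rw [map_sum, Finset.mul_sum]
  have key : ∀ j ∈ Finset.range (n+1),
      (conjRecip n Q).coeff j * w ^ j
        = (fun j => w ^ n * (starRingEnd ℂ) (Q.coeff (n - j) * (((starRingEnd ℂ) w)⁻¹) ^ (n - j))) j := by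
    intro j hj
    have hjn : j ≤ n := by
      simp only [Finset.mem_range] at hj
      omega
    rw [cr_coeff_le hjn]
    simp only [map_mul, map_pow, map_inv₀, RingHomCompTriple.comp_apply, RingHom.id_apply]
    have hwp : (w⁻¹ : ℂ) ^ (n - j) = w ^ j * (w^n)⁻¹ := by
      rw [inv_pow, pow_sub₀ w hw hjn]
      rw [mul_inv, inv_inv]
      ring
    rw [hwp]
    have hwn : (w : ℂ)^n ≠ 0 := pow_ne_zero _ hw
    field_simp
  rw [Finset.sum_congr rfl key]
  -- now reindex
  have := Finset.sum_range_reflect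
    (fun j => w ^ n * (starRingEnd ℂ) (Q.coeff j * (((starRingEnd ℂ) w)⁻¹) ^ j)) (n+1)
  rw [← this]
  apply Finset.sum_congr rfl
  intro j hj
  have hjn : j ≤ n := by
    simp only [Finset.mem_range] at hj
    omega
  congr 2 <;> omega

-- ==== part 6 : modulus comparison lemmas ====

lemma factor_lt {R : ℝ} (hR : 1 < R) {w a : ℂ} (hw : 1 ≤ Complex.abs w)
    (ha : Complex.abs a ≤ 1) :
    Complex.abs (w - a) < Complex.abs ((R : ℂ) * w - a) := by
  have hid : Complex.abs ((R : ℂ)*w - a)^2 - Complex.abs (w - a)^2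
      = (R^2 - 1) * Complex.abs w^2 - 2*(R - 1)*(w * conj' a).re := by
    rw [Complex.sq_abs, Complex.sq_abs, Complex.sq_abs]
    simp only [Complex.normSq_apply, Complex.sq_abs, Complex.sub_re, Complex.sub_im,
      Complex.mul_re, Complex.mul_im, Complex.ofReal_re, Complex.ofReal_im,
      Complex.conj_re, Complex.conj_im]
    ring
  have hre : (w * conj' a).re ≤ Complex.abs w := by
    calc (w * conj' a).re ≤ Complex.abs (w * conj' a) := Complex.re_le_abs _
      _ = Complex.abs w * Complex.abs a := by rw [map_mul, Complex.abs_conj]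
      _ ≤ Complex.abs w * 1 := by
          nlinarith [Complex.abs.nonneg w]
      _ = Complex.abs w := mul_one _
  have hpos : 0 < Complex.abs ((R : ℂ)*w - a)^2 - Complex.abs (w - a)^2 := by
    rw [hid]
    have hd : 0 < R - 1 := by linarith
    have hx : 0 < Complex.abs w := by linarith
    have h9 : 2*(R-1)*(w * conj' a).re ≤ 2*(R-1)*Complex.abs w := by nlinarith
    have h11 : 0 < (R+1)*Complex.abs w - 2 := by nlinarith
    have h10 : 2*(R-1)*Complex.abs w < (R^2-1) * Complex.abs w^2 := by
      nlinarith [mul_pos (mul_pos hd hx) h11]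
    linarith
  nlinarith [Complex.abs.nonneg (w - a), Complex.abs.nonneg ((R : ℂ)*w - a)]

lemma prod_map_le (s : Multiset ℂ) (f g : ℂ → ℝ) (h : ∀ a ∈ s, 0 ≤ f a ∧ f a ≤ g a) :
    (s.map f).prod ≤ (s.map g).prod := by
  induction s using Multiset.induction_on with
  | empty => simp
  | cons a t ih =>
    simp only [Multiset.map_cons, Multiset.prod_cons]
    have h1 := h a (Multiset.mem_cons_self a t)
    have h2 : ∀ b ∈ t, 0 ≤ f b ∧ f b ≤ g b := fun b hb => h b (Multiset.mem_cons_of_mem hb)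
    have h3 : (0:ℝ) ≤ (t.map f).prod :=
      Multiset.prod_nonneg (by
        intro x hx
        obtain ⟨b, hb, rfl⟩ := Multiset.mem_map.mp hx
        exact (h2 b hb).1)
    exact mul_le_mul h1.2 (ih h2) h3 (le_trans h1.1 h1.2)

lemma prod_map_lt (s : Multiset ℂ) (hs : s ≠ 0) (f g : ℂ → ℝ)
    (h : ∀ a ∈ s, 0 < f a ∧ f a < g a) :
    (s.map f).prod < (s.map g).prod := by
  induction s using Multiset.induction_on with
  | empty => exact absurd rfl hs
  | cons a t ih =>
    simp only [Multiset.map_cons, Multiset.prod_cons]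
    have h1 := h a (Multiset.mem_cons_self a t)
    have h2 : ∀ b ∈ t, 0 < f b ∧ f b < g b := fun b hb => h b (Multiset.mem_cons_of_mem hb)
    by_cases ht : t = 0
    · subst ht; simpa using h1.2
    · have h3 : (0:ℝ) < (t.map f).prod :=
        Multiset.prod_pos (by
          intro x hx
          obtain ⟨b, hb, rfl⟩ := Multiset.mem_map.mp hx
          exact (h2 b hb).1)
      exact mul_lt_mul'' h1.2 (ih ht h2) (le_of_lt h1.1) (le_of_lt h3)

lemma abs_eval (f : Polynomial ℂ) (w : ℂ) :
    Complex.abs (f.eval w)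
      = Complex.abs f.leadingCoeff * ((f.roots.map fun a => Complex.abs (w - a)).prod) := by
  have h1 : f.eval w = f.leadingCoeff * (f.roots.map fun a => w - a).prod := by
    conv_lhs => rw [f_factor f]
    rw [eval_mul, eval_C, prod_eval]
  rw [h1, map_mul, map_multiset_prod Complex.abs, Multiset.map_map]
  rfl

lemma abs_eval_lt {f : Polynomial ℂ} (hf : f ≠ 0) (h1d : 1 ≤ f.natDegree)
    (hroots : ∀ a ∈ f.roots, Complex.abs a ≤ 1) {R : ℝ} (hR : 1 < R)
    {w : ℂ} (hw : 1 ≤ Complex.abs w) (hfw : f.eval w ≠ 0) :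
    Complex.abs (f.eval w) < Complex.abs (f.eval ((R : ℂ) * w)) := by
  rw [abs_eval f w, abs_eval f ((R : ℂ) * w)]
  have hlc : 0 < Complex.abs f.leadingCoeff := Complex.abs.pos (leadingCoeff_ne_zero.mpr hf)
  apply mul_lt_mul_of_pos_left _ hlc
  apply prod_map_lt
  · intro h0
    have := roots_card_eq f
    rw [h0] at this
    simp at this
    omega
  · intro a ha
    constructor
    · rw [Complex.abs.pos_iff, sub_ne_zero]
      intro hEq
      apply hfw
      rw [hEq]
      exact (mem_roots hf).mp ha
    · exact factor_lt hR hw (hroots a ha)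

lemma dilate_sub_eval_ne {f : Polynomial ℂ} (hf : f ≠ 0) {n : ℕ} (hdeg : f.natDegree = n)
    (hn : 1 ≤ n) (hroots : ∀ a ∈ f.roots, Complex.abs a ≤ 1) {R : ℝ} (hR : 1 < R)
    {α : ℂ} (hα : Complex.abs α ≤ 1) {w : ℂ} (hw : 1 ≤ Complex.abs w) :
    (dilate R f - C α * f).eval w ≠ 0 := by
  rw [eval_sub, eval_mul, eval_C, dilate_eval]
  have hRw : 1 < Complex.abs ((R : ℂ) * w) := by
    rw [map_mul, Complex.abs_ofReal, abs_of_pos (by linarith : (0:ℝ) < R)]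
    nlinarith
  by_cases hfw : f.eval w = 0
  · rw [hfw, mul_zero, sub_zero]
    exact eval_ne_zero_of_roots hf hroots hRw
  · intro h0
    have hEq : f.eval ((R : ℂ) * w) = α * f.eval w := by linear_combination h0
    have h1 : Complex.abs (f.eval ((R : ℂ) * w)) = Complex.abs α * Complex.abs (f.eval w) := by
      rw [hEq, map_mul]
    have h2 := abs_eval_lt hf (by omega) hroots hR hw hfw
    nlinarith [Complex.abs.nonneg (f.eval w), Complex.abs.pos hfw]

lemma one_lt_Rn {R : ℝ} (hR : 1 < R) {n : ℕ} (hn : 1 ≤ n) : 1 < R^n :=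
  one_lt_pow₀ hR (by omega)

lemma Rn_sub_ne {R : ℝ} (hR : 1 < R) {n : ℕ} (hn : 1 ≤ n) {α : ℂ}
    (hα : Complex.abs α ≤ 1) : ((R : ℂ))^n - α ≠ 0 := by
  intro h
  have hEq : ((R : ℂ))^n = α := by linear_combination h
  have h1 : Complex.abs (((R : ℂ))^n) = R^n := by
    rw [map_pow, Complex.abs_ofReal, abs_of_pos (by linarith : (0:ℝ) < R)]
  rw [hEq] at h1
  have := one_lt_Rn hR hn
  rw [← h1] at this
  linarith

lemma dilate_sub_facts {f : Polynomial ℂ} (hf : f ≠ 0) {n : ℕ} (hdeg : f.natDegree = n)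
    (hn : 1 ≤ n) (hroots : ∀ a ∈ f.roots, Complex.abs a ≤ 1) {R : ℝ} (hR : 1 < R)
    {α : ℂ} (hα : Complex.abs α ≤ 1) :
    (dilate R f - C α * f) ≠ 0 ∧ (dilate R f - C α * f).natDegree = n ∧
      ∀ a ∈ (dilate R f - C α * f).roots, Complex.abs a ≤ 1 := by
  have hco : (dilate R f - C α * f).coeff n = ((R : ℂ)^n - α) * f.coeff n := by
    rw [coeff_sub, coeff_C_mul, dilate_coeff]
    ring
  have hlcn : f.coeff n ≠ 0 := by
    rw [← hdeg]
    exact leadingCoeff_ne_zero.mpr hf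
  have hcon : (dilate R f - C α * f).coeff n ≠ 0 := by
    rw [hco]
    exact mul_ne_zero (Rn_sub_ne hR hn hα) hlcn
  have hne : (dilate R f - C α * f) ≠ 0 := fun h => hcon (by rw [h]; simp)
  have hdegW : (dilate R f - C α * f).natDegree = n := by
    apply le_antisymm
    · apply natDegree_le_iff_coeff_eq_zero.mpr
      intro j hj
      rw [coeff_sub, coeff_C_mul, dilate_coeff]
      rw [coeff_eq_zero_of_natDegree_lt (by omega)]
      ring
    · exact le_natDegree_of_ne_zero hcon
  refine ⟨hne, hdegW, ?_⟩
  intro a ha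
  by_contra h
  push_neg at h
  exact dilate_sub_eval_ne hf hdeg hn hroots hR hα (le_of_lt h) ((mem_roots hne).mp ha)

lemma roots_ge_of_eval {G : Polynomial ℂ} (hG : ∀ z : ℂ, Complex.abs z < 1 → G.eval z ≠ 0) :
    ∀ a ∈ G.roots, 1 ≤ Complex.abs a := fun a ha =>
  le_of_not_gt fun h => hG a h ((mem_roots'.mp ha).2)

lemma abs_coeff_le_eval_zero {G : Polynomial ℂ} {n : ℕ} (hGd : G.natDegree ≤ n)
    (hroots : ∀ a ∈ G.roots, 1 ≤ Complex.abs a) :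
    Complex.abs (G.coeff n) ≤ Complex.abs (G.eval 0) := by
  rcases lt_or_eq_of_le hGd with h | h
  · rw [coeff_eq_zero_of_natDegree_lt h]
    simp [Complex.abs.nonneg]
  · have hlc : G.coeff n = G.leadingCoeff := by rw [← h]; rfl
    rw [hlc, abs_eval G 0]
    have h1 : 1 ≤ ((G.roots.map fun a => Complex.abs (0 - a)).prod) := by
      apply Multiset.one_le_prod
      intro x hx
      obtain ⟨b, hb, rfl⟩ := Multiset.mem_map.mp hx
      rw [zero_sub, map_neg_eq_map]
      exact hroots b hb
    nlinarith [Complex.abs.nonneg G.leadingCoeff]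

lemma abs_le_cr {G : Polynomial ℂ} {n : ℕ} (hGd : G.natDegree ≤ n)
    (hroots : ∀ a ∈ G.roots, 1 ≤ Complex.abs a) {w : ℂ} (hw : 1 ≤ Complex.abs w) :
    Complex.abs (G.eval w) ≤ Complex.abs ((conjRecip n G).eval w) := by
  have hw0 : w ≠ 0 := by
    intro h; rw [h] at hw; simp at hw; linarith
  rw [cr_eval hGd hw0, map_mul, map_pow, Complex.abs_conj]
  set u : ℂ := ((starRingEnd ℂ) w)⁻¹ with hu
  rw [abs_eval G w, abs_eval G u]
  have hcard : Multiset.card G.roots ≤ n := by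
    rw [roots_card_eq]; exact hGd
  have key : ∀ a ∈ G.roots, Complex.abs (w - a) ≤ Complex.abs w * Complex.abs (u - a) := by
    intro a ha
    have h1 : Complex.abs w * Complex.abs (u - a) = Complex.abs (conj' w * a - 1) := by
      have h2 : w * (u - a) = w * (conj' w)⁻¹ * (1 - conj' w * a) := by
        rw [hu]
        have hcw : conj' w ≠ 0 := by simpa using hw0
        field_simp
      have h3 : Complex.abs (w * (u - a)) = Complex.abs (1 - conj' w * a) := by
        rw [h2, map_mul, map_mul, map_inv₀, Complex.abs_conj]
        have hwpos : 0 < Complex.abs w := by linarith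
        rw [mul_inv_cancel₀ (ne_of_gt hwpos), one_mul]
      rw [← map_mul, h3, ← map_neg_eq_map]
      congr 1
      ring
    rw [h1]
    have h5 := abs_sq_identity w a
    have h6 : 0 ≤ (Complex.abs w ^ 2 - 1) * (Complex.abs a ^ 2 - 1) := by
      have := hroots a ha
      apply mul_nonneg <;> nlinarith
    nlinarith [Complex.abs.nonneg (conj' w * a - 1), Complex.abs.nonneg (w - a)]
  calc Complex.abs G.leadingCoeff * ((G.roots.map fun a => Complex.abs (w - a)).prod)
      ≤ Complex.abs G.leadingCoeff
          * ((G.roots.map fun a => Complex.abs w * Complex.abs (u - a)).prod) := by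
        apply mul_le_mul_of_nonneg_left _ (Complex.abs.nonneg _)
        apply prod_map_le
        intro a ha
        exact ⟨Complex.abs.nonneg _, key a ha⟩
    _ = Complex.abs G.leadingCoeff * (Complex.abs w ^ Multiset.card G.roots
          * ((G.roots.map fun a => Complex.abs (u - a)).prod)) := by
        rw [Multiset.prod_map_mul]
        congr 2
        rw [Multiset.map_const', Multiset.prod_replicate]
    _ ≤ Complex.abs w ^ n * (Complex.abs G.leadingCoeff
          * ((G.roots.map fun a => Complex.abs (u - a)).prod)) := by
        have h7 : Complex.abs w ^ Multiset.card G.roots ≤ Complex.abs w ^ n :=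
          pow_le_pow_right₀ hw hcard
        have h8 : (0:ℝ) ≤ (G.roots.map fun a => Complex.abs (u - a)).prod :=
          Multiset.prod_nonneg (by
            intro x hx
            obtain ⟨b, hb, rfl⟩ := Multiset.mem_map.mp hx
            exact Complex.abs.nonneg _)
        have h9 := mul_le_mul_of_nonneg_right h7 h8
        have h10 := mul_le_mul_of_nonneg_left h9 (Complex.abs.nonneg G.leadingCoeff)
        calc Complex.abs G.leadingCoeff * (Complex.abs w ^ Multiset.card G.roots
              * ((G.roots.map fun a => Complex.abs (u - a)).prod))
            ≤ Complex.abs G.leadingCoeff * (Complex.abs w ^ n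
              * ((G.roots.map fun a => Complex.abs (u - a)).prod)) := h10
          _ = Complex.abs w ^ n * (Complex.abs G.leadingCoeff
              * ((G.roots.map fun a => Complex.abs (u - a)).prod)) := by ring

lemma cr_lower {P : Polynomial ℂ} {n : ℕ} (hPd : P.natDegree ≤ n) {m : ℝ}
    (hinn : ∀ u : ℂ, Complex.abs u ≤ 1 → m ≤ Complex.abs (P.eval u))
    {w : ℂ} (hw : 1 ≤ Complex.abs w) :
    m * Complex.abs w ^ n ≤ Complex.abs ((conjRecip n P).eval w) := by
  have hw0 : w ≠ 0 := by
    intro h; rw [h] at hw; simp at hw; linarith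
  rw [cr_eval hPd hw0, map_mul, map_pow, Complex.abs_conj]
  have hu : Complex.abs (((starRingEnd ℂ) w)⁻¹) ≤ 1 := by
    rw [map_inv₀, Complex.abs_conj]
    calc (Complex.abs w)⁻¹ ≤ 1⁻¹ := inv_anti₀ zero_lt_one hw
      _ = 1 := inv_one
  have := hinn (((starRingEnd ℂ) w)⁻¹) hu
  have hwn : (0:ℝ) ≤ Complex.abs w ^ n := pow_nonneg (Complex.abs.nonneg w) n
  nlinarith [pow_le_pow_right₀ hw (le_refl n)]

lemma cr_roots {G : Polynomial ℂ} {n : ℕ} (hGd : G.natDegree ≤ n)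
    (hG : ∀ z : ℂ, Complex.abs z < 1 → G.eval z ≠ 0) :
    ∀ a ∈ (conjRecip n G).roots, Complex.abs a ≤ 1 := by
  intro a ha
  by_contra h
  push_neg at h
  have ha0 : a ≠ 0 := by
    intro h0; rw [h0] at h; simp at h; linarith
  have hev : (conjRecip n G).eval a = 0 := (mem_roots'.mp ha).2
  rw [cr_eval hGd ha0] at hev
  rcases mul_eq_zero.mp hev with h1 | h1
  · exact pow_ne_zero n ha0 h1
  · have h2 : G.eval (((starRingEnd ℂ) a)⁻¹) = 0 := by
      have := congrArg (starRingEnd ℂ) h1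
      simpa using this
    apply hG (((starRingEnd ℂ) a)⁻¹) _ h2
    rw [map_inv₀, Complex.abs_conj]
    calc (Complex.abs a)⁻¹ < 1⁻¹ := inv_strictAnti₀ zero_lt_one h
      _ = 1 := inv_one

lemma cr_add_C (G : Polynomial ℂ) (n : ℕ) (c : ℂ) :
    conjRecip n (G + C c) = conjRecip n G + C ((starRingEnd ℂ) c) * X^n := by
  rw [conjRecip, conjRecip, Polynomial.map_add, Polynomial.map_C, reflect_add]
  congr 1
  have h1 : (C ((starRingEnd ℂ) c) : Polynomial ℂ) = C ((starRingEnd ℂ) c) * X^0 := by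
    rw [pow_zero, mul_one]
  rw [h1, reflect_C_mul, reflect_monomial, revAt_le (Nat.zero_le n), Nat.sub_zero]
  simp

-- ==== part 7 : key lemma, step I, inner bound ====

lemma dilate_add_C (R : ℝ) (f : Polynomial ℂ) (c : ℂ) :
    dilate R (f + C c) = dilate R f + C c := by
  simp [dilate, add_comp, C_comp]

lemma Bop_eval_add_C (n : ℕ) (l0 l1 l2 : ℂ) (f : Polynomial ℂ) (c w : ℂ) :
    (Bop n l0 l1 l2 (f + C c)).eval w = (Bop n l0 l1 l2 f).eval w + l0 * c := by
  simp only [Bop_eval, derivative_add, derivative_C, add_zero, eval_add, eval_C]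
  ring

/-- Key lemma (the case `m = 0`): comparison with the conjugate-reciprocal. -/
lemma keyLemma {n : ℕ} (hn : 1 ≤ n) {l0 l1 l2 : ℂ} (hB : AdmissibleParams n l0 l1 l2)
    {R : ℝ} (hR : 1 < R) {α : ℂ} (hα : Complex.abs α ≤ 1)
    {G : Polynomial ℂ} (hGd : G.natDegree ≤ n)
    (hG : ∀ v : ℂ, Complex.abs v < 1 → G.eval v ≠ 0)
    {z : ℂ} (hz : 1 < Complex.abs z) :
    Complex.abs ((Bop n l0 l1 l2 (dilate R G)).eval z - α * (Bop n l0 l1 l2 G).eval z)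
      ≤ Complex.abs ((Bop n l0 l1 l2 (dilate R (conjRecip n G))).eval z
          - α * (Bop n l0 l1 l2 (conjRecip n G)).eval z) := by
  have hG0 : G.eval 0 ≠ 0 := hG 0 (by simp)
  have hG0' : G.coeff 0 ≠ 0 := by rwa [coeff_zero_eq_eval_zero]
  have hQne : conjRecip n G ≠ 0 := cr_ne_zero hG0'
  have hQdeg : (conjRecip n G).natDegree = n := cr_natDegree hGd hG0'
  have hQroots : ∀ a ∈ (conjRecip n G).roots, Complex.abs a ≤ 1 := cr_roots hGd hG
  obtain ⟨hWne, hWdeg, hWroots⟩ := dilate_sub_facts hQne hQdeg hn hQroots hR hα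
  have hCne0 : (Bop n l0 l1 l2 (dilate R (conjRecip n G) - C α * conjRecip n G)).eval z ≠ 0 :=
    rahman hn hB hWne hWdeg hWroots hz
  rw [Bop_eval_sub_C_mul] at hCne0
  by_contra hlt
  push_neg at hlt
  set A : ℂ := (Bop n l0 l1 l2 (dilate R G)).eval z - α * (Bop n l0 l1 l2 G).eval z with hA
  set Cv : ℂ := (Bop n l0 l1 l2 (dilate R (conjRecip n G))).eval z
      - α * (Bop n l0 l1 l2 (conjRecip n G)).eval z with hCv
  have hC0 : Cv ≠ 0 := hCne0
  set β : ℂ := A / Cv with hβdef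
  have hβ : 1 < Complex.abs β := by
    rw [hβdef, map_div₀]
    exact (one_lt_div (Complex.abs.pos hC0)).mpr hlt
  -- the auxiliary polynomial G - β Q*
  have hfroots1 : ∀ v : ℂ, 1 < Complex.abs v → (G - C β * conjRecip n G).eval v ≠ 0 := by
    intro v hv h0
    rw [eval_sub, eval_mul, eval_C] at h0
    have h1 : G.eval v = β * (conjRecip n G).eval v := by linear_combination h0
    have hQv : (conjRecip n G).eval v ≠ 0 := eval_ne_zero_of_roots hQne hQroots hv
    have h2 : Complex.abs (G.eval v) ≤ Complex.abs ((conjRecip n G).eval v) :=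
      abs_le_cr hGd (roots_ge_of_eval hG) (le_of_lt hv)
    rw [h1, map_mul] at h2
    nlinarith [Complex.abs.pos hQv]
  have hfco : (G - C β * conjRecip n G).coeff n
      = G.coeff n - β * (starRingEnd ℂ) (G.coeff 0) := by
    rw [coeff_sub, coeff_C_mul, cr_coeff_le (le_refl n), Nat.sub_self]
  have hfcone : (G - C β * conjRecip n G).coeff n ≠ 0 := by
    rw [hfco]
    intro h0
    have hEq : G.coeff n = β * (starRingEnd ℂ) (G.coeff 0) := by linear_combination h0
    have h1 : Complex.abs (G.coeff n) = Complex.abs β * Complex.abs (G.coeff 0) := by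
      rw [hEq, map_mul, Complex.abs_conj]
    have h2 : Complex.abs (G.coeff n) ≤ Complex.abs (G.eval 0) :=
      abs_coeff_le_eval_zero hGd (roots_ge_of_eval hG)
    rw [← coeff_zero_eq_eval_zero] at h2
    nlinarith [Complex.abs.pos hG0']
  have hfne : G - C β * conjRecip n G ≠ 0 := fun h => hfcone (by rw [h]; simp)
  have hfdeg : (G - C β * conjRecip n G).natDegree = n := by
    apply le_antisymm
    · apply natDegree_le_iff_coeff_eq_zero.mpr
      intro j hj
      rw [coeff_sub, coeff_C_mul, coeff_eq_zero_of_natDegree_lt (by omega), cr_coeff_gt hGd hj]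
      ring
    · exact le_natDegree_of_ne_zero hfcone
  have hfroots : ∀ a ∈ (G - C β * conjRecip n G).roots, Complex.abs a ≤ 1 := by
    intro a ha
    by_contra h
    push_neg at h
    exact hfroots1 a h ((mem_roots hfne).mp ha)
  obtain ⟨hWβne, hWβdeg, hWβroots⟩ := dilate_sub_facts hfne hfdeg hn hfroots hR hα
  apply rahman hn hB hWβne hWβdeg hWβroots hz
  rw [dilate_sub_C_mul, Bop_eval_sub_C_mul]
  rw [Bop_eval_sub_C_mul, Bop_eval_sub_C_mul]
  have hgoal : ((Bop n l0 l1 l2 (dilate R G)).eval z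
        - β * (Bop n l0 l1 l2 (dilate R (conjRecip n G))).eval z)
      - α * ((Bop n l0 l1 l2 G).eval z - β * (Bop n l0 l1 l2 (conjRecip n G)).eval z)
      = A - β * Cv := by
    rw [hA, hCv]; ring
  rw [hgoal, hβdef]
  field_simp
  ring

/-- Step I : lower bound for the conjugate-reciprocal side. -/
lemma stepI {n : ℕ} (hn : 1 ≤ n) {l0 l1 l2 : ℂ} (hB : AdmissibleParams n l0 l1 l2)
    {R : ℝ} (hR : 1 < R) {α : ℂ} (hα : Complex.abs α ≤ 1)
    {P : Polynomial ℂ} (hPd : P.natDegree ≤ n)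
    {m : ℝ} (hm : 0 < m)
    (hinn : ∀ u : ℂ, Complex.abs u ≤ 1 → m ≤ Complex.abs (P.eval u))
    {z : ℂ} (hz : 1 < Complex.abs z) :
    m * Complex.abs ((R : ℂ)^n - α) * Complex.abs (Lam n l0 l1 l2) * Complex.abs z ^ n
      ≤ Complex.abs ((Bop n l0 l1 l2 (dilate R (conjRecip n P))).eval z
          - α * (Bop n l0 l1 l2 (conjRecip n P)).eval z) := by
  have hz0 : z ≠ 0 := by
    intro h; rw [h] at hz; simp at hz; linarith
  have hP0 : m ≤ Complex.abs (P.eval 0) := hinn 0 (by simp)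
  have hP0' : P.coeff 0 ≠ 0 := by
    rw [coeff_zero_eq_eval_zero]
    intro h
    rw [h] at hP0
    simp at hP0
    linarith
  set D : ℂ := ((R : ℂ)^n - α) * (m : ℂ) * Lam n l0 l1 l2 * z^n with hD
  have hD0 : D ≠ 0 := by
    rw [hD]
    apply mul_ne_zero
    apply mul_ne_zero
    apply mul_ne_zero
    · exact Rn_sub_ne hR hn hα
    · simpa using ne_of_gt hm
    · exact Lam_ne_zero hn hB
    · exact pow_ne_zero n hz0
  have hDabs : Complex.abs D
      = m * Complex.abs ((R : ℂ)^n - α) * Complex.abs (Lam n l0 l1 l2) * Complex.abs z ^ n := by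
    rw [hD, map_mul, map_mul, map_mul, map_pow, Complex.abs_ofReal, abs_of_pos hm]
    ring
  set Cv : ℂ := (Bop n l0 l1 l2 (dilate R (conjRecip n P))).eval z
      - α * (Bop n l0 l1 l2 (conjRecip n P)).eval z with hCv
  by_contra hlt
  push_neg at hlt
  rw [← hDabs] at hlt
  set μ : ℂ := Cv / D with hμdef
  have hμ : Complex.abs μ < 1 := by
    rw [hμdef, map_div₀]
    exact (div_lt_one (Complex.abs.pos hD0)).mpr hlt
  -- the auxiliary polynomial Q - μ m X^n
  set g : Polynomial ℂ := C (m : ℂ) * X^n with hg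
  set f : Polynomial ℂ := conjRecip n P - C μ * g with hf
  have hgco : ∀ j : ℕ, (C μ * g).coeff j = if j = n then μ * m else 0 := by
    intro j
    rw [hg, coeff_C_mul, coeff_C_mul, coeff_X_pow]
    by_cases h : j = n <;> simp [h]
  have hfco : f.coeff n = (starRingEnd ℂ) (P.coeff 0) - μ * m := by
    rw [hf, coeff_sub, cr_coeff_le (le_refl n), Nat.sub_self, hgco]
    simp
  have hfcone : f.coeff n ≠ 0 := by
    rw [hfco]
    intro h0
    have hEq : (starRingEnd ℂ) (P.coeff 0) = μ * (m : ℂ) := by linear_combination h0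
    have h1 : Complex.abs (P.coeff 0) = Complex.abs μ * m := by
      have := congrArg Complex.abs hEq
      rwa [Complex.abs_conj, map_mul, Complex.abs_ofReal, abs_of_pos hm] at this
    rw [coeff_zero_eq_eval_zero] at h1
    nlinarith
  have hfne : f ≠ 0 := fun h => hfcone (by rw [h]; simp)
  have hfdeg : f.natDegree = n := by
    apply le_antisymm
    · apply natDegree_le_iff_coeff_eq_zero.mpr
      intro j hj
      rw [hf, coeff_sub, cr_coeff_gt hPd hj, hgco, if_neg (by omega)]
      ring
    · exact le_natDegree_of_ne_zero hfcone
  have hfroots : ∀ a ∈ f.roots, Complex.abs a ≤ 1 := by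
    intro a ha
    by_contra h
    push_neg at h
    have hev : f.eval a = 0 := (mem_roots hfne).mp ha
    rw [hf, eval_sub, eval_mul, eval_mul, eval_C, eval_C, eval_pow, eval_X] at hev
    have h1 : (conjRecip n P).eval a = μ * ((m : ℂ) * a^n) := by linear_combination hev
    have h2 : m * Complex.abs a ^ n ≤ Complex.abs ((conjRecip n P).eval a) :=
      cr_lower hPd hinn (le_of_lt h)
    rw [h1, map_mul, map_mul, map_pow, Complex.abs_ofReal, abs_of_pos hm] at h2
    have hapow : 0 < Complex.abs a ^ n := pow_pos (by linarith) n
    nlinarith [mul_pos (sub_pos.mpr hμ) (mul_pos hm hapow)]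
  obtain ⟨hWne, hWdeg, hWroots⟩ := dilate_sub_facts hfne hfdeg hn hfroots hR hα
  apply rahman hn hB hWne hWdeg hWroots hz
  rw [hf, dilate_sub_C_mul, Bop_eval_sub_C_mul, Bop_eval_sub_C_mul, Bop_eval_sub_C_mul]
  have hgdil : dilate R g = C ((m : ℂ) * (R : ℂ)^n) * X^n := by
    rw [hg, dilate, mul_comp, C_comp, pow_comp, X_comp, mul_pow, ← C_pow, ← mul_assoc, ← C_mul]
  have hBg : (Bop n l0 l1 l2 g).eval z = Lam n l0 l1 l2 * (m : ℂ) * z^n := by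
    rw [hg, Bop_eval_C_mul_Xn hn]
  have hBgd : (Bop n l0 l1 l2 (dilate R g)).eval z
      = Lam n l0 l1 l2 * ((m : ℂ) * (R : ℂ)^n) * z^n := by
    rw [hgdil, Bop_eval_C_mul_Xn hn]
  rw [hBg, hBgd]
  have hgoal : ((Bop n l0 l1 l2 (dilate R (conjRecip n P))).eval z
        - μ * (Lam n l0 l1 l2 * ((m : ℂ) * (R : ℂ)^n) * z^n))
      - α * ((Bop n l0 l1 l2 (conjRecip n P)).eval z - μ * (Lam n l0 l1 l2 * (m : ℂ) * z^n))
      = Cv - μ * D := by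
    rw [hCv, hD]; ring
  rw [hgoal, hμdef]
  field_simp
  ring

/-- minimum-modulus principle : the bound on the circle extends inside. -/
lemma inner_bound {P : Polynomial ℂ} (hP : ∀ v : ℂ, Complex.abs v < 1 → P.eval v ≠ 0)
    {m : ℝ} (hm : 0 < m) (hms : ∀ w : ℂ, Complex.abs w = 1 → m ≤ Complex.abs (P.eval w)) :
    ∀ u : ℂ, Complex.abs u ≤ 1 → m ≤ Complex.abs (P.eval u) := by
  have hne : ∀ v : ℂ, Complex.abs v ≤ 1 → P.eval v ≠ 0 := by
    intro v hv
    rcases lt_or_eq_of_le hv with h | h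
    · exact hP v h
    · intro h0
      have := hms v h
      rw [h0] at this
      simp at this
      linarith
  intro u hu
  have hball : ‖(P.eval u)⁻¹‖ ≤ m⁻¹ := by
    apply Complex.norm_le_of_forall_mem_frontier_norm_le (U := Metric.ball (0:ℂ) 1)
      (f := fun v => (P.eval v)⁻¹) Metric.isBounded_ball
    · constructor
      · apply DifferentiableOn.inv
        · exact (Polynomial.differentiable P).differentiableOn
        · intro x hx
          exact hP x (by simpa [mem_ball_zero_iff, Complex.abs_apply] using hx)
      · apply ContinuousOn.inv₀
        · exact (Polynomial.continuous P).continuousOn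
        · intro x hx
          rw [closure_ball (0:ℂ) one_ne_zero, mem_closedBall_zero_iff] at hx
          exact hne x hx
    · intro x hx
      rw [frontier_ball (0:ℂ) one_ne_zero, mem_sphere_zero_iff_norm] at hx
      have h1 := hms x hx
      have h2 : P.eval x ≠ 0 := hne x (le_of_eq hx)
      rw [norm_inv, Complex.norm_eq_abs]
      exact inv_anti₀ hm h1
    · rw [closure_ball (0:ℂ) one_ne_zero, mem_closedBall_zero_iff]
      exact hu
  have h2 : P.eval u ≠ 0 := hne u hu
  rw [norm_inv, Complex.norm_eq_abs] at hball
  have h3 : 0 < Complex.abs (P.eval u) := Complex.abs.pos h2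
  have h5 := inv_anti₀ (inv_pos.mpr h3) hball
  simpa using h5

-- ==== part 8 : final assembly ====

lemma dilate_C_mul_Xn (R : ℝ) (c : ℂ) (n : ℕ) :
    dilate R (C c * X^n) = C (c * (R : ℂ)^n) * X^n := by
  rw [dilate, mul_comp, C_comp, pow_comp, X_comp, mul_pow, ← C_pow, ← mul_assoc, ← C_mul]

lemma minModulus_nonneg (P : Polynomial ℂ) : 0 ≤ minModulus (fun w => P.eval w) := by
  apply Real.sInf_nonneg
  rintro x ⟨w, hw, rfl⟩
  exact Complex.abs.nonneg _

lemma minModulus_le (P : Polynomial ℂ) {w : ℂ} (hw : Complex.abs w = 1) :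
    minModulus (fun w => P.eval w) ≤ Complex.abs (P.eval w) := by
  apply csInf_le
  · exact ⟨0, by rintro x ⟨v, hv, rfl⟩; exact Complex.abs.nonneg _⟩
  · exact ⟨w, hw, rfl⟩

/-- The main estimate, for `1 < |y|`. -/
lemma main_est {n : ℕ} (hn : 1 ≤ n) {l0 l1 l2 : ℂ} (hB : AdmissibleParams n l0 l1 l2)
    {P : Polynomial ℂ} (hPd : P.natDegree ≤ n)
    (hP : ∀ v : ℂ, Complex.abs v < 1 → P.eval v ≠ 0)
    {α : ℂ} (hα : Complex.abs α ≤ 1) {R : ℝ} (hR : 1 < R)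
    {y : ℂ} (hy : 1 < Complex.abs y) :
    Complex.abs ((Bop n l0 l1 l2 (dilate R P)).eval y - α * (Bop n l0 l1 l2 P).eval y)
      ≤ Complex.abs ((Bop n l0 l1 l2 (dilate R (conjRecip n P))).eval y
          - α * (Bop n l0 l1 l2 (conjRecip n P)).eval y)
        - (Complex.abs ((R : ℂ)^n - α) * Complex.abs (Lam n l0 l1 l2)
            - Complex.abs (1 - α) * Complex.abs l0) * minModulus (fun w => P.eval w) := by
  set m := minModulus (fun w => P.eval w) with hmdef
  have hm0 : 0 ≤ m := minModulus_nonneg P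
  rcases eq_or_lt_of_le hm0 with hmz | hmz
  · have h := keyLemma hn hB hR hα hPd hP hy
    rw [← hmz]
    simpa using h
  · have hinn : ∀ u : ℂ, Complex.abs u ≤ 1 → m ≤ Complex.abs (P.eval u) :=
      inner_bound hP hmz (fun w hw => minModulus_le P hw)
    have hy0 : y ≠ 0 := by intro h; rw [h] at hy; simp at hy; linarith
    set A : ℂ := (Bop n l0 l1 l2 (dilate R P)).eval y - α * (Bop n l0 l1 l2 P).eval y with hA
    set Cv : ℂ := (Bop n l0 l1 l2 (dilate R (conjRecip n P))).eval y
        - α * (Bop n l0 l1 l2 (conjRecip n P)).eval y with hCv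
    set b : ℂ := (m : ℂ) * ((1 : ℂ) - α) * l0 with hb
    set d : ℂ := (m : ℂ) * (((R : ℂ))^n - α) * Lam n l0 l1 l2 * y^n with hd
    have hdabs : Complex.abs d
        = m * Complex.abs ((R : ℂ)^n - α) * Complex.abs (Lam n l0 l1 l2)
            * Complex.abs y ^ n := by
      rw [hd, map_mul, map_mul, map_mul, map_pow, Complex.abs_ofReal, abs_of_pos hmz]
    have hbabs : Complex.abs b = m * Complex.abs (1 - α) * Complex.abs l0 := by
      rw [hb, map_mul, map_mul, Complex.abs_ofReal, abs_of_pos hmz]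
    have hstep1 : Complex.abs d ≤ Complex.abs Cv := by
      rw [hdabs]
      have h := stepI hn hB hR hα hPd hmz hinn hy
      calc m * Complex.abs ((R:ℂ)^n - α) * Complex.abs (Lam n l0 l1 l2) * Complex.abs y ^ n
          = m * Complex.abs ((R:ℂ)^n - α) * Complex.abs (Lam n l0 l1 l2)
              * Complex.abs y ^ n := rfl
        _ ≤ Complex.abs Cv := h
    have hd0 : d ≠ 0 := by
      rw [hd]
      apply mul_ne_zero
      apply mul_ne_zero
      apply mul_ne_zero
      · simpa using ne_of_gt hmz
      · exact Rn_sub_ne hR hn hα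
      · exact Lam_ne_zero hn hB
      · exact pow_ne_zero n hy0
    have habsd : (0:ℝ) < Complex.abs d := Complex.abs.pos hd0
    have habsCv : (0:ℝ) < Complex.abs Cv := lt_of_lt_of_le habsd hstep1
    have hC0 : Cv ≠ 0 := by
      intro h
      rw [h] at habsCv
      simp at habsCv
    -- the λ-family of inequalities
    have hfam : ∀ lam : ℂ, Complex.abs lam < 1 →
        Complex.abs (A + lam * b) ≤ Complex.abs (Cv + (starRingEnd ℂ) lam * d) := by
      intro lam hlam
      have hGd : (P + C (lam * (m : ℂ))).natDegree ≤ n := by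
        apply le_trans (natDegree_add_le _ _)
        simp only [natDegree_C, max_le_iff]
        exact ⟨hPd, by omega⟩
      have hGz : ∀ v : ℂ, Complex.abs v < 1 → (P + C (lam * (m : ℂ))).eval v ≠ 0 := by
        intro v hv h0
        rw [eval_add, eval_C] at h0
        have h1 : P.eval v = -(lam * (m : ℂ)) := by linear_combination h0
        have h2 : Complex.abs (P.eval v) = Complex.abs lam * m := by
          rw [h1, map_neg_eq_map, map_mul, Complex.abs_ofReal, abs_of_pos hmz]
        have h3 := hinn v (le_of_lt hv)
        nlinarith
      have hKey := keyLemma hn hB hR hα hGd hGz hy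
      have hL : (Bop n l0 l1 l2 (dilate R (P + C (lam * (m : ℂ))))).eval y
          - α * (Bop n l0 l1 l2 (P + C (lam * (m : ℂ)))).eval y = A + lam * b := by
        rw [dilate_add_C, Bop_eval_add_C, Bop_eval_add_C, hA, hb]
        ring
      have hcr : conjRecip n (P + C (lam * (m : ℂ)))
          = conjRecip n P + C ((starRingEnd ℂ) lam) * (C (m : ℂ) * X^n) := by
        rw [cr_add_C]
        have hc : (starRingEnd ℂ) (lam * (m : ℂ)) = (starRingEnd ℂ) lam * (m : ℂ) := by
          rw [map_mul, Complex.conj_ofReal]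
        rw [hc, ← mul_assoc, ← C_mul]
      have hRr : (Bop n l0 l1 l2 (dilate R (conjRecip n (P + C (lam * (m : ℂ)))))).eval y
          - α * (Bop n l0 l1 l2 (conjRecip n (P + C (lam * (m : ℂ))))).eval y
          = Cv + (starRingEnd ℂ) lam * d := by
        rw [hcr, dilate_add_C_mul, dilate_C_mul_Xn, Bop_eval_add_C_mul, Bop_eval_add_C_mul,
          Bop_eval_C_mul_Xn hn, Bop_eval_C_mul_Xn hn, hCv, hd]
        ring
      rw [hL, hRr] at hKey
      exact hKey
    -- the extremal phase
    set cl1 : ℂ := -(Cv * ((Complex.abs d : ℝ) : ℂ)) / (((Complex.abs Cv : ℝ) : ℂ) * d) with hcl1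
    have hcl1abs : Complex.abs cl1 = 1 := by
      have h1 : Complex.abs (-(Cv * ((Complex.abs d : ℝ) : ℂ)))
          = Complex.abs Cv * Complex.abs d := by
        rw [map_neg_eq_map, map_mul, Complex.abs_ofReal, abs_of_pos habsd]
      have h2 : Complex.abs ((((Complex.abs Cv : ℝ)) : ℂ) * d)
          = Complex.abs Cv * Complex.abs d := by
        rw [map_mul, Complex.abs_ofReal, abs_of_pos habsCv]
      rw [hcl1, map_div₀, h1, h2, div_self (by positivity)]
    set lam1 : ℂ := (starRingEnd ℂ) cl1 with hlam1
    have hlam1abs : Complex.abs lam1 = 1 := by rw [hlam1, Complex.abs_conj]; exact hcl1abs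
    -- limit r → 1⁻
    have hlim : Complex.abs (A + ((1:ℝ):ℂ) * lam1 * b)
        ≤ Complex.abs (Cv + ((1:ℝ):ℂ) * cl1 * d) := by
      have hcontF : Continuous (fun r : ℝ => Complex.abs (A + (r : ℂ) * lam1 * b)) :=
        Complex.continuous_abs.comp
          (continuous_const.add
            ((Complex.continuous_ofReal.mul continuous_const).mul continuous_const))
      have hcontG : Continuous (fun r : ℝ => Complex.abs (Cv + (r : ℂ) * cl1 * d)) :=
        Complex.continuous_abs.comp
          (continuous_const.add
            ((Complex.continuous_ofReal.mul continuous_const).mul continuous_const))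
      apply le_of_tendsto_of_tendsto
        ((hcontF.tendsto 1).mono_left
          (nhdsWithin_le_nhds : nhdsWithin (1:ℝ) (Set.Iio 1) ≤ nhds 1))
        ((hcontG.tendsto 1).mono_left
          (nhdsWithin_le_nhds : nhdsWithin (1:ℝ) (Set.Iio 1) ≤ nhds 1))
      filter_upwards [Ioo_mem_nhdsLT_of_mem (Set.mem_Ioc.mpr ⟨zero_lt_one, le_refl (1:ℝ)⟩)]
        with r hr
      have hr1 : Complex.abs ((r : ℂ) * lam1) < 1 := by
        rw [map_mul, hlam1abs, mul_one, Complex.abs_ofReal, abs_of_pos hr.1]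
        exact hr.2
      have h := hfam ((r : ℂ) * lam1) hr1
      have hc2 : (starRingEnd ℂ) ((r : ℂ) * lam1) = (r : ℂ) * cl1 := by
        rw [map_mul, Complex.conj_ofReal, hlam1, Complex.conj_conj]
      rw [hc2] at h
      simpa [mul_assoc] using h
    have hCd : Complex.abs (Cv + ((1:ℝ):ℂ) * cl1 * d) = Complex.abs Cv - Complex.abs d := by
      have hrw : Cv + ((1:ℝ):ℂ) * cl1 * d
          = Cv * (1 - ((Complex.abs d : ℝ) : ℂ) / ((Complex.abs Cv : ℝ) : ℂ)) := by
        rw [hcl1]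
        have hCvne : ((Complex.abs Cv : ℝ) : ℂ) ≠ 0 := by
          simpa using ne_of_gt habsCv
        field_simp
        push_cast
        ring
      rw [hrw, map_mul]
      have hcast : (1 : ℂ) - ((Complex.abs d : ℝ) : ℂ) / ((Complex.abs Cv : ℝ) : ℂ)
          = (((1 - Complex.abs d / Complex.abs Cv : ℝ)) : ℂ) := by
        push_cast
        ring
      rw [hcast, Complex.abs_ofReal, abs_of_nonneg]
      · rw [mul_sub, mul_one, mul_div_cancel₀ _ (ne_of_gt habsCv)]
      · rw [sub_nonneg, div_le_one habsCv]
        exact hstep1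
    have htri := Complex.abs.add_le (A + ((1:ℝ):ℂ) * lam1 * b) (-(((1:ℝ):ℂ) * lam1 * b))
    rw [add_neg_cancel_right, map_neg_eq_map] at htri
    have hblam : Complex.abs (((1:ℝ):ℂ) * lam1 * b) = Complex.abs b := by
      rw [map_mul, map_mul, hlam1abs, Complex.abs_ofReal]
      simp
    have hfinal1 : Complex.abs A ≤ Complex.abs Cv - Complex.abs d + Complex.abs b := by
      rw [hCd] at hlim
      rw [hblam] at htri
      linarith
    -- conclude
    have hyp1 : 1 ≤ Complex.abs y ^ n := by
      calc (1:ℝ) = 1^n := (one_pow n).symm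
        _ ≤ Complex.abs y ^ n := pow_le_pow_left₀ zero_le_one (le_of_lt hy) n
    have hpos1 : 0 ≤ m * Complex.abs ((R:ℂ)^n - α) * Complex.abs (Lam n l0 l1 l2) := by
      positivity
    rw [hdabs, hbabs] at hfinal1
    nlinarith [hfinal1, mul_le_mul_of_nonneg_left hyp1 hpos1]

end BnAux

open BnAux in
theorem Bn_compare_aux
    (n : ℕ) (hn : 1 ≤ n) (l0 l1 l2 : ℂ) (hB : AdmissibleParams n l0 l1 l2)
    (P : Polynomial ℂ) (hdeg : P.degree ≤ n)
    (hP : ∀ z : ℂ, Complex.abs z < 1 → P.eval z ≠ 0)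
    (α : ℂ) (hα : Complex.abs α ≤ 1) (R : ℝ) (hR : 1 < R)
    (z : ℂ) (hz : 1 ≤ Complex.abs z) :
    Complex.abs ((Bop n l0 l1 l2 (dilate R P)).eval z
        - α * (Bop n l0 l1 l2 P).eval z)
      ≤ Complex.abs ((Bop n l0 l1 l2 (dilate R (conjRecip n P))).eval z
          - α * (Bop n l0 l1 l2 (conjRecip n P)).eval z)
        - (Complex.abs ((R : ℂ) ^ n - α) * Complex.abs (Lam n l0 l1 l2)
            - Complex.abs (1 - α) * Complex.abs l0)
          * minModulus (fun w => P.eval w) := by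
  have hPd : P.natDegree ≤ n := natDegree_le_iff_degree_le.mpr hdeg
  rcases eq_or_lt_of_le hz with hz1 | hz1
  · -- |z| = 1 : take a limit from outside
    set K : ℝ := (Complex.abs ((R : ℂ) ^ n - α) * Complex.abs (Lam n l0 l1 l2)
        - Complex.abs (1 - α) * Complex.abs l0) * minModulus (fun w => P.eval w) with hK
    set g1 : ℂ → ℝ := fun v => Complex.abs ((Bop n l0 l1 l2 (dilate R P)).eval v
        - α * (Bop n l0 l1 l2 P).eval v) with hg1
    set g2 : ℂ → ℝ := fun v => Complex.abs ((Bop n l0 l1 l2 (dilate R (conjRecip n P))).eval v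
        - α * (Bop n l0 l1 l2 (conjRecip n P)).eval v) with hg2
    have hg1c : Continuous g1 := by
      apply Complex.continuous_abs.comp
      exact ((Bop n l0 l1 l2 (dilate R P)).continuous).sub
        (continuous_const.mul (Bop n l0 l1 l2 P).continuous)
    have hg2c : Continuous g2 := by
      apply Complex.continuous_abs.comp
      exact ((Bop n l0 l1 l2 (dilate R (conjRecip n P))).continuous).sub
        (continuous_const.mul (Bop n l0 l1 l2 (conjRecip n P)).continuous)
    have hmain : ∀ t : ℝ, 0 < t → g1 ((((1+t : ℝ)) : ℂ) * z) ≤ g2 ((((1+t : ℝ)) : ℂ) * z) - K := by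
      intro t ht
      have habs : 1 < Complex.abs ((((1+t : ℝ)) : ℂ) * z) := by
        rw [map_mul, Complex.abs_ofReal, abs_of_pos (by linarith), ← hz1, mul_one]
        linarith
      exact main_est hn hB hPd hP hα hR habs
    set h : ℝ → ℝ := fun t => g2 ((((1+t : ℝ)) : ℂ) * z) - K - g1 ((((1+t : ℝ)) : ℂ) * z)
      with hh
    have hhc : Continuous h := by
      apply Continuous.sub
      apply Continuous.sub
      · exact hg2c.comp (by continuity)
      · exact continuous_const
      · exact hg1c.comp (by continuity)
    have hlim : (0:ℝ) ≤ h 0 := by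
      apply ge_of_tendsto ((hhc.tendsto 0).mono_left
        (nhdsWithin_le_nhds : nhdsWithin (0:ℝ) (Set.Ioi 0) ≤ nhds 0))
      filter_upwards [self_mem_nhdsWithin] with t (ht : t ∈ Set.Ioi (0:ℝ))
      have := hmain t ht
      rw [hh]
      simp only
      linarith
    have hzero : ((((1+(0:ℝ) : ℝ)) : ℂ) * z) = z := by
      norm_num
    rw [hh] at hlim
    simp only [hzero] at hlim
    rw [hg1, hg2] at hlim
    simp only at hlim
    linarith
  · exact main_est hn hB hPd hP hα hR hz1



/-- Lemma 5 of the paper. -/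
theorem Bn_compare_with_conjugate_reciprocal_min_term
    (n : ℕ) (hn : 1 ≤ n) (l0 l1 l2 : ℂ) (hB : AdmissibleParams n l0 l1 l2)
    (P : Polynomial ℂ) (hdeg : P.degree ≤ n)
    (hP : ∀ z : ℂ, ‖z‖ < 1 → P.eval z ≠ 0)
    (α : ℂ) (hα : ‖α‖ ≤ 1) (R : ℝ) (hR : 1 < R)
    (z : ℂ) (hz : 1 ≤ ‖z‖) :
    ‖((Bop n l0 l1 l2 (dilate R P)).eval z
        - α * (Bop n l0 l1 l2 P).eval z)‖
      ≤ ‖((Bop n l0 l1 l2 (dilate R (conjRecip n P))).eval z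
          - α * (Bop n l0 l1 l2 (conjRecip n P)).eval z)‖
        - (‖((R : ℂ) ^ n - α)‖ * ‖(Lam n l0 l1 l2)‖
            - ‖(1 - α)‖ * ‖l0‖)
          * minModulus (fun w => P.eval w) := by
    exact Bn_compare_aux n hn l0 l1 l2 hB P hdeg hP α hα R hR z hz
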